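/- arXiv:2402.03965 — 7 statements merged into one kernel-verified Lean document; each statement's English description precedes it below -/
import Mathlib

section
/- For any nonzero g ∈ L[x] with deg(g) < n, the apparent distance of g satisfies d*(g) ≤ n − deg(m_g), where m_g = gcd(g, x^n−1). -/
open Polynomial

noncomputable def dftP {L : Type*} [Field L] (n : ℕ) (α : L) (f : L[X]) : L[X] :=
  ∑ j ∈ Finset.range n, C (f.eval (α ^ j)) * X ^ j

noncomputable def idftP {L : Type*} [Field L] (n : ℕ) (α : L) (g : L[X]) : L[X] :=
  C ((n : L)⁻¹) * ∑ i ∈ Finset.range n, C (g.eval (α⁻¹ ^ i)) * X ^ i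

open Classical in
noncomputable def appDist {L : Type*} [Field L] (n : ℕ) (g : L[X]) : ℕ :=
  if g = 0 then 0
  else (Finset.range n).sup fun h => n - ((X ^ h * g) %ₘ (X ^ n - 1)).natDegree

structure CyclicCode (L : Type*) [Field L] (q n : ℕ) where
  carrier : Set (Polynomial L)
  zero_mem : 0 ∈ carrier
  deg_lt : ∀ f ∈ carrier, Polynomial.natDegree f < n
  coeff_mem : ∀ f ∈ carrier, ∀ i, (Polynomial.coeff f i) ^ q = Polynomial.coeff f i
  add_mem : ∀ f ∈ carrier, ∀ g ∈ carrier, f + g ∈ carrier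
  smul_mem : ∀ a : L, a ^ q = a → ∀ f ∈ carrier, Polynomial.C a * f ∈ carrier
  shift_mem : ∀ f ∈ carrier, (Polynomial.X * f) %ₘ (Polynomial.X ^ n - 1) ∈ carrier

noncomputable def minDist {L : Type*} [Field L] {q n : ℕ} (C : CyclicCode L q n) : ℕ :=
  sInf { w | ∃ c ∈ C.carrier, c ≠ 0 ∧ w = c.support.card }

open Classical in
noncomputable def appDistAt {L : Type*} [Field L] {q n : ℕ} (α : L) (C : CyclicCode L q n) : ℕ :=
  sInf { d | ∃ c ∈ C.carrier, c ≠ 0 ∧ d = appDist n (dftP n α c) }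

open Classical in
noncomputable def appDistCode {L : Type*} [Field L] {q n : ℕ} (C : CyclicCode L q n) : ℕ :=
  sSup { d | ∃ α : L, IsPrimitiveRoot α n ∧ d = appDistAt α C }

def IsOptimalRoot {L : Type*} [Field L] {q n : ℕ} (α : L) (C : CyclicCode L q n) : Prop :=
  IsPrimitiveRoot α n ∧ appDistAt α C = appDistCode C

def IsGenBy {L : Type*} [Field L] {q n : ℕ} (v : Polynomial L) (C : CyclicCode L q n) : Prop :=
  v ∈ C.carrier ∧ ∀ C' : CyclicCode L q n, v ∈ C'.carrier → C.carrier ⊆ C'.carrier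

def IsIdemGen {L : Type*} [Field L] {q n : ℕ} (e : Polynomial L) (C : CyclicCode L q n) : Prop :=
  e ∈ C.carrier ∧ (e * e) %ₘ (X ^ n - 1) = e ∧ ∀ c ∈ C.carrier, (e * c) %ₘ (X ^ n - 1) = c

def IsGenPoly {L : Type*} [Field L] {q n : ℕ} (g : Polynomial L) (C : CyclicCode L q n) : Prop :=
  g ∈ C.carrier ∧ g.Monic ∧ g ∣ (X ^ n - 1) ∧ (∀ c ∈ C.carrier, g ∣ c) ∧
    ∀ f : L[X], f.natDegree < n → (∀ i, f.coeff i ^ q = f.coeff i) → g ∣ f → f ∈ C.carrier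

noncomputable def polyGcd {L : Type*} [Field L] (a b : L[X]) : L[X] :=
  letI := Classical.decEq L[X]
  EuclideanDomain.gcd a b


/-- d*(g) ≤ n − deg (gcd (g, x^n − 1)). -/
theorem stmt2 {L : Type*} [Field L] (n : ℕ) (hn : 0 < n) (g : L[X]) (hg0 : g ≠ 0)
    (hgn : g.natDegree < n) :
    appDist n g ≤ n - (polyGcd g (X ^ n - 1)).natDegree := by
  letI := Classical.decEq L[X]
  have hmonic : (X ^ n - 1 : L[X]).Monic := by
    simpa using monic_X_pow_sub_C (1 : L) hn.ne'
  have hdegXn : (X ^ n - 1 : L[X]).natDegree = n := by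
    simpa using natDegree_X_pow_sub_C (n := n) (r := (1 : L))
  have hcop : IsCoprime (X ^ n - 1 : L[X]) X := by
    refine ⟨-1, X ^ (n - 1), ?_⟩
    have : X ^ (n - 1) * X = (X : L[X]) ^ n := by
      rw [← pow_succ, Nat.sub_add_cancel hn]
    rw [this]; ring
  rw [appDist, if_neg hg0]
  apply Finset.sup_le
  intro h _
  set r := (X ^ h * g) %ₘ (X ^ n - 1) with hr
  have hrne : r ≠ 0 := by
    intro h0
    have hdvd : (X ^ n - 1 : L[X]) ∣ X ^ h * g :=
      (modByMonic_eq_zero_iff_dvd hmonic).mp h0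
    have : (X ^ n - 1 : L[X]) ∣ g :=
      ((hcop.pow_right (n := h)).dvd_of_dvd_mul_left hdvd)
    have := Polynomial.natDegree_le_of_dvd this hg0
    omega
  have hgcd_dvd : polyGcd g (X ^ n - 1) ∣ r := by
    have h1 : polyGcd g (X ^ n - 1) ∣ X ^ h * g :=
      Dvd.dvd.mul_left (EuclideanDomain.gcd_dvd_left _ _) _
    have h2 : polyGcd g (X ^ n - 1) ∣ (X ^ n - 1 : L[X]) :=
      EuclideanDomain.gcd_dvd_right _ _
    have : r = X ^ h * g - (X ^ n - 1) * ((X ^ h * g) /ₘ (X ^ n - 1)) :=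
      (modByMonic_eq_sub_mul_div _ _)
    rw [this]
    exact dvd_sub h1 (h2.mul_right _)
  have : (polyGcd g (X ^ n - 1)).natDegree ≤ r.natDegree :=
    Polynomial.natDegree_le_of_dvd hgcd_dvd hrne
  omega
end

section
/- For a nonzero polynomial g of degree less than n, d*(g) = n − deg(m_g) if and only if there exists h ∈ {0,...,n−1} such that (x^h·g mod x^n−1) divides x^n−1 (equivalently, x^h·g mod x^n−1 and m_g are associated polynomials). -/
open Polynomial

/-- d*(g) = n − deg(m_g) iff some cyclic shift x^h·g mod x^n−1 divides x^n−1. -/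
theorem stmt3 {L : Type*} [Field L] (n : ℕ) (hn : 0 < n) (g : L[X]) (hg0 : g ≠ 0)
    (hgn : g.natDegree < n) :
    appDist n g = n - (polyGcd g (X ^ n - 1)).natDegree ↔
      ∃ h < n, ((X ^ h * g) %ₘ (X ^ n - 1)) ∣ (X ^ n - 1) := by

  classical
  set P : L[X] := X ^ n - 1 with hP
  have hPm : P.Monic := by
    have := monic_X_pow_sub_C (1 : L) hn.ne'
    simpa [hP] using this
  have hP0 : P ≠ 0 := hPm.ne_zero
  have hdegP : P.degree = n := by
    have := degree_X_pow_sub_C hn (1 : L)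
    simpa [hP] using this
  have hndegP : P.natDegree = n := natDegree_eq_of_degree_eq_some hdegP
  have hcop : IsCoprime (X : L[X]) P := by
    refine ⟨X ^ (n - 1), -1, ?_⟩
    have hx : (X : L[X]) ^ (n - 1) * X = X ^ n := by
      rw [← pow_succ, Nat.sub_add_cancel hn]
    rw [hx, hP]; ring
  set m : L[X] := polyGcd g P with hm
  have hm_dvd_g : m ∣ g := @EuclideanDomain.gcd_dvd_left L[X] _ (Classical.decEq _) g P
  have hm_dvd_P : m ∣ P := @EuclideanDomain.gcd_dvd_right L[X] _ (Classical.decEq _) g P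
  have hm0 : m ≠ 0 := by
    intro h0
    have := (@EuclideanDomain.gcd_eq_zero_iff L[X] _ (Classical.decEq _) g P).mp h0
    exact hg0 this.1
  have hmdeg : m.natDegree < n :=
    lt_of_le_of_lt (natDegree_le_of_dvd hm_dvd_g hg0) hgn
  set r : ℕ → L[X] := fun h => (X ^ h * g) %ₘ P with hr
  have hcoph : ∀ h : ℕ, IsCoprime ((X : L[X]) ^ h) P := fun h => hcop.pow_left
  have hr0 : ∀ h : ℕ, r h ≠ 0 := by
    intro h h0
    have hdvd : P ∣ X ^ h * g := (modByMonic_eq_zero_iff_dvd hPm).mp h0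
    have hPg : P ∣ g := ((hcoph h).symm).dvd_of_dvd_mul_left hdvd
    have := natDegree_le_of_dvd hPg hg0
    omega
  have hsub : ∀ h : ℕ, r h = X ^ h * g - P * (X ^ h * g /ₘ P) := fun h =>
    modByMonic_eq_sub_mul_div _ P
  have hm_dvd_r : ∀ h : ℕ, m ∣ r h := by
    intro h
    rw [hsub h]
    exact dvd_sub (hm_dvd_g.mul_left _) (hm_dvd_P.mul_right _)
  have hrdeg : ∀ h : ℕ, (r h).natDegree < n := by
    intro h
    have := degree_modByMonic_lt (X ^ h * g) hPm
    rw [hdegP] at this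
    exact (natDegree_lt_iff_degree_lt (hr0 h)).mpr this
  -- Key 1: if r h ∣ P then deg (r h) = deg m
  have key1 : ∀ h : ℕ, r h ∣ P → (r h).natDegree = m.natDegree := by
    intro h hd
    have hrg : r h ∣ X ^ h * g := by
      have : X ^ h * g = r h + P * (X ^ h * g /ₘ P) := by rw [hsub h]; ring
      rw [this]
      exact dvd_add dvd_rfl (dvd_mul_of_dvd_left hd _)
    have hcr : IsCoprime (r h) ((X : L[X]) ^ h) :=
      ((hcoph h).of_isCoprime_of_dvd_right hd).symm
    have hrg2 : r h ∣ g := hcr.dvd_of_dvd_mul_left hrg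
    have hrm : r h ∣ m := @EuclideanDomain.dvd_gcd L[X] _ (Classical.decEq _) g P _ hrg2 hd
    exact le_antisymm (natDegree_le_of_dvd hrm hm0) (natDegree_le_of_dvd (hm_dvd_r h) (hr0 h))
  -- Key 2: if deg (r h) = deg m then r h ∣ P
  have key2 : ∀ h : ℕ, (r h).natDegree = m.natDegree → r h ∣ P := by
    intro h hdeg
    obtain ⟨t, ht⟩ := hm_dvd_r h
    have ht0 : t ≠ 0 := by
      intro h0; apply hr0 h; rw [ht, h0, mul_zero]
    have hnt : t.natDegree = 0 := by
      have := natDegree_mul hm0 ht0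
      rw [← ht, hdeg] at this
      omega
    have hu : IsUnit t := by
      rw [isUnit_iff_degree_eq_zero, degree_eq_natDegree ht0, hnt]
      rfl
    have hrm : r h ∣ m := by
      obtain ⟨u, hu'⟩ := hu
      refine ⟨(↑u⁻¹ : L[X]), ?_⟩
      rw [ht, ← hu', mul_assoc, ← Units.val_mul, mul_inv_cancel, Units.val_one, mul_one]
    exact hrm.trans hm_dvd_P
  have happ : appDist n g = (Finset.range n).sup fun h => n - (r h).natDegree := by
    rw [appDist, if_neg hg0]
  constructor
  · intro heq
    obtain ⟨h, hhmem, hhval⟩ :=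
      Finset.exists_mem_eq_sup (Finset.range n) ⟨0, Finset.mem_range.mpr hn⟩
        (fun h => n - (r h).natDegree)
    rw [happ, hhval] at heq
    have hhn : h < n := Finset.mem_range.mp hhmem
    have : (r h).natDegree = m.natDegree := by
      have := hrdeg h
      omega
    exact ⟨h, hhn, key2 h this⟩
  · rintro ⟨h, hhn, hdvd⟩
    rw [happ]
    apply le_antisymm
    · apply Finset.sup_le
      intro h' _
      have := natDegree_le_of_dvd (hm_dvd_r h') (hr0 h')
      omega
    · have hle := Finset.le_sup (f := fun h => n - (r h).natDegree) (Finset.mem_range.mpr hhn)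
      have h2 : (n : ℕ) - m.natDegree = n - (r h).natDegree := by rw [key1 h hdvd]
      rw [h2]
      simpa using hle
end

section
/- For any codeword c of a cyclic code C ⊆ F_q[x]/(x^n−1) and any primitive n-th root of unity α, the Hamming weight of c equals n − deg(gcd(φ_{α,c}, x^n−1)). -/
open Polynomial

-- auxiliary lemmas
open Classical in
lemma geom_sum_root {L : Type*} [Field L] {β : L} {n : ℕ} (hβ : β ^ n = 1) :
    ∑ j ∈ Finset.range n, β ^ j = if β = 1 then (n : L) else 0 := by
  split_ifs with h
  · simp [h]
  · have h0 : (∑ j ∈ Finset.range n, β ^ j) * (β - 1) = 0 := by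
      rw [geom_sum_mul, hβ, sub_self]
    exact (mul_eq_zero.mp h0).resolve_right (sub_ne_zero.mpr h)

open Classical in
lemma dftP_eval {L : Type*} [Field L] {n : ℕ} (hn : 0 < n) {α : L} (hα : IsPrimitiveRoot α n)
    {c : L[X]} (hdeg : c.natDegree < n) (k : ℕ) (hk : k < n) :
    (dftP n α c).eval (α ^ k) = n * c.coeff ((n - k) % n) := by
  have hmod : (n - k) % n = if k = 0 then 0 else n - k := by
    rcases Nat.eq_zero_or_pos k with rfl | hk0
    · simp
    · rw [if_neg hk0.ne', Nat.mod_eq_of_lt (by omega)]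
  have key : ∀ i, i < n → (n ∣ i + k ↔ i = (n - k) % n) := by
    intro i hi
    rw [hmod]
    constructor
    · intro hdvd
      rcases Nat.eq_zero_or_pos (i + k) with h0 | hpos
      · have h1 : i = 0 ∧ k = 0 := by omega
        simp [h1.1, h1.2]
      · have h1 : n ≤ i + k := Nat.le_of_dvd hpos hdvd
        have h2 : i + k - n < n := by omega
        have h4 : i + k - n = 0 := Nat.eq_zero_of_dvd_of_lt (Nat.dvd_sub hdvd dvd_rfl) h2
        split_ifs with hk0 <;> omega
    · rintro rfl
      split_ifs with hk0
      · simp [hk0]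
      · exact ⟨1, by omega⟩
  unfold dftP
  rw [eval_finset_sum]
  simp only [eval_mul, eval_C, eval_pow, eval_X]
  calc ∑ j ∈ Finset.range n, c.eval (α ^ j) * (α ^ k) ^ j
      = ∑ j ∈ Finset.range n, ∑ i ∈ Finset.range n, c.coeff i * (α ^ (i + k)) ^ j := by
        refine Finset.sum_congr rfl fun j _ => ?_
        rw [eval_eq_sum_range' hdeg, Finset.sum_mul]
        refine Finset.sum_congr rfl fun i _ => ?_
        ring
    _ = ∑ i ∈ Finset.range n, c.coeff i * ∑ j ∈ Finset.range n, (α ^ (i + k)) ^ j := by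
        rw [Finset.sum_comm]
        simp [Finset.mul_sum]
    _ = ∑ i ∈ Finset.range n, c.coeff i * (if α ^ (i + k) = 1 then (n : L) else 0) := by
        refine Finset.sum_congr rfl fun i _ => ?_
        rw [geom_sum_root (by rw [← pow_mul, mul_comm, pow_mul, hα.pow_eq_one, one_pow])]
    _ = (n : L) * c.coeff ((n - k) % n) := by
        rw [Finset.sum_eq_single ((n - k) % n)]
        · rw [if_pos, mul_comm]
          rw [hα.pow_eq_one_iff_dvd]
          exact (key _ (Nat.mod_lt _ hn)).mpr rfl
        · intro i hi hne
          rw [if_neg, mul_zero]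
          rw [hα.pow_eq_one_iff_dvd]
          exact fun hd => hne ((key i (Finset.mem_range.mp hi)).mp hd)
        · intro h
          exact absurd (Finset.mem_range.mpr (Nat.mod_lt _ hn)) h

/-- for a codeword c of a cyclic code, ω(c) = n − deg gcd(φ_{α,c}, x^n−1). -/
theorem stmt10 {L : Type*} [Field L] (p q s n : ℕ) (hp : p.Prime) [CharP L p]
    (hq : q = p ^ s) (hs : 0 < s) (hn : 0 < n) (hcop : Nat.Coprime n q)
    (Cc : CyclicCode L q n) (c : L[X]) (hc : c ∈ Cc.carrier)
    (α : L) (hα : IsPrimitiveRoot α n) :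
    c.support.card = n - (polyGcd (dftP n α c) (X ^ n - 1)).natDegree := by
  letI := Classical.decEq L[X]
  classical
  have : NeZero n := ⟨hn.ne'⟩
  -- (n : L) ≠ 0
  have hpn : ¬ (p ∣ n) := by
    intro h
    have hpq : p ∣ q := hq ▸ dvd_pow_self p hs.ne'
    have h1 : p ∣ Nat.gcd n q := Nat.dvd_gcd h hpq
    rw [Nat.Coprime] at hcop
    rw [hcop] at h1
    exact hp.ne_one (Nat.dvd_one.mp h1)
  have hn0 : (n : L) ≠ 0 := by
    rwa [Ne, CharP.cast_eq_zero_iff L p]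
  set φ := dftP n α c with hφ
  set g : L[X] := polyGcd φ (X ^ n - 1) with hg
  have hgdef : g = EuclideanDomain.gcd φ (X ^ n - 1) := rfl
  have hXn : (X ^ n - 1 : L[X]) ≠ 0 := by
    have hm : (X ^ n - C (1 : L)).Monic := monic_X_pow_sub_C 1 hn.ne'
    simpa using hm.ne_zero
  have hsep : (X ^ n - 1 : L[X]).Separable := by
    have := separable_X_pow_sub_C (1 : L) hn0 one_ne_zero
    simpa using this
  have hsplits : Splits (X ^ n - 1 : L[X]) := by
    have := X_pow_sub_one_splits hα
    simpa using this
  have hgd : g ∣ (X ^ n - 1) := hgdef ▸ EuclideanDomain.gcd_dvd_right _ _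
  have hgφ : g ∣ φ := hgdef ▸ EuclideanDomain.gcd_dvd_left _ _
  have hg0 : g ≠ 0 := by
    intro h
    exact hXn (zero_dvd_iff.mp (h ▸ hgd))
  have hgsep : g.Separable := hsep.of_dvd hgd
  have hgsplits : Splits g := hsplits.of_dvd hXn hgd
  have hdegg : g.natDegree = g.roots.toFinset.card := by
    rw [hgsplits.natDegree_eq_card_roots,
      Multiset.toFinset_card_of_nodup (nodup_roots hgsep)]
  -- roots of g
  have hroot : ∀ x : L, g.eval x = 0 ↔ (φ.eval x = 0 ∧ x ^ n = 1) := by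
    intro x
    constructor
    · intro hx
      obtain ⟨t, ht⟩ := hgφ
      obtain ⟨u, hu⟩ := hgd
      constructor
      · rw [ht, eval_mul, hx, zero_mul]
      · have := congrArg (eval x) hu
        rw [eval_mul, hx, zero_mul] at this
        simp only [eval_sub, eval_pow, eval_X, eval_one] at this
        exact sub_eq_zero.mp this
    · rintro ⟨h1, h2⟩
      have hb := EuclideanDomain.gcd_eq_gcd_ab φ (X ^ n - 1)
      have := congrArg (eval x) hb
      rw [← hgdef] at this
      simp only [eval_add, eval_mul, eval_sub, eval_pow, eval_X, eval_one, h1, h2,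
        zero_mul, sub_self, add_zero] at this
      simpa using this
  have hrootsset : g.roots.toFinset =
      ((Finset.range n).filter (fun k => φ.eval (α ^ k) = 0)).image (fun k => α ^ k) := by
    ext x
    simp only [Multiset.mem_toFinset, mem_roots hg0, IsRoot, Finset.mem_image,
      Finset.mem_filter, Finset.mem_range]
    constructor
    · intro hx
      obtain ⟨hφx, hxn⟩ := (hroot x).mp hx
      obtain ⟨k, hk, rfl⟩ := hα.eq_pow_of_pow_eq_one hxn
      exact ⟨k, ⟨hk, hφx⟩, rfl⟩
    · rintro ⟨k, ⟨hk, hφk⟩, rfl⟩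
      exact (hroot _).mpr ⟨hφk, by rw [← pow_mul, mul_comm, pow_mul, hα.pow_eq_one, one_pow]⟩
  have hcardimg : g.roots.toFinset.card =
      ((Finset.range n).filter (fun k => φ.eval (α ^ k) = 0)).card := by
    rw [hrootsset]
    apply Finset.card_image_of_injOn
    intro i hi j hj hij
    exact hα.pow_inj (Finset.mem_range.mp (Finset.mem_filter.mp hi).1)
      (Finset.mem_range.mp (Finset.mem_filter.mp hj).1) hij
  -- eval at α^k in terms of coefficients
  have hdegc : c.natDegree < n := Cc.deg_lt c hc
  have heval : ∀ k ∈ Finset.range n, (φ.eval (α ^ k) = 0 ↔ c.coeff ((n - k) % n) = 0) := by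
    intro k hk
    rw [hφ, dftP_eval hn hα hdegc k (Finset.mem_range.mp hk)]
    simp [hn0]
  -- involution helper
  have hinv : ∀ i < n, (n - (n - i) % n) % n = i := by
    intro i hi
    rcases Nat.eq_zero_or_pos i with rfl | hi0
    · simp
    · have h1 : (n - i) % n = n - i := Nat.mod_eq_of_lt (by omega)
      rw [h1]
      have h2 : n - (n - i) = i := by omega
      rw [h2, Nat.mod_eq_of_lt hi]
  have hcard : ((Finset.range n).filter (fun k => φ.eval (α ^ k) = 0)).card
      = ((Finset.range n).filter (fun i => c.coeff i = 0)).card := by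
    apply Finset.card_bij' (fun k _ => (n - k) % n) (fun i _ => (n - i) % n)
    · intro k hk
      have hk' := Finset.mem_filter.mp hk
      refine Finset.mem_filter.mpr ⟨Finset.mem_range.mpr (Nat.mod_lt _ hn), ?_⟩
      exact (heval k hk'.1).mp hk'.2
    · intro i hi
      have hi' := Finset.mem_filter.mp hi
      have hilt := Finset.mem_range.mp hi'.1
      refine Finset.mem_filter.mpr ⟨Finset.mem_range.mpr (Nat.mod_lt _ hn), ?_⟩
      rw [heval _ (Finset.mem_range.mpr (Nat.mod_lt _ hn)), hinv i hilt]
      exact hi'.2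
    · intro k hk
      exact hinv k (Finset.mem_range.mp (Finset.mem_filter.mp hk).1)
    · intro i hi
      exact hinv i (Finset.mem_range.mp (Finset.mem_filter.mp hi).1)
  -- support
  have hsupp : c.support = (Finset.range n).filter (fun i => c.coeff i ≠ 0) := by
    ext i
    simp only [mem_support_iff, Finset.mem_filter, Finset.mem_range]
    constructor
    · intro h
      exact ⟨lt_of_le_of_lt (le_natDegree_of_ne_zero h) hdegc, h⟩
    · exact fun h => h.2
  have hsplit : ((Finset.range n).filter (fun i => c.coeff i = 0)).card
      + ((Finset.range n).filter (fun i => c.coeff i ≠ 0)).card = n := by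
    rw [Finset.card_filter_add_card_filter_not]
    · exact Finset.card_range n
  have hwle : c.support.card ≤ n := by
    rw [hsupp]
    exact le_trans (Finset.card_filter_le _ _) (le_of_eq (Finset.card_range n))
  rw [hdegg, hcardimg, hcard]
  rw [hsupp] at hwle ⊢
  omega
end

section
/- For any nonzero f ∈ F_q[x]/(x^n−1) and any primitive n-th root of unity α, the apparent distance of the Fourier transform of f is at most the Hamming weight of f: d*(φ_{α,f}) ≤ ω(f). -/
open Polynomial

open Matrix in

lemma vanish_consec {L : Type*} [Field L] {n : ℕ} {α : L} (hα : IsPrimitiveRoot α n)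
    (hn : 0 < n) (f : L[X]) (hfn : f.natDegree < n) (m : ℕ)
    (hvan : ∀ i < f.support.card, f.eval (α ^ (m + i)) = 0) : f = 0 := by
  classical
  set w := f.support.card with hw
  have hα0 : α ≠ 0 := hα.ne_zero hn.ne'
  set E : Fin w → ℕ := fun k => ((f.support.equivFin.symm k : f.support) : ℕ) with hE
  have hEmem : ∀ k, E k ∈ f.support := fun k => (f.support.equivFin.symm k).2
  have hEinj : Function.Injective E := by
    intro a b hab
    exact f.support.equivFin.symm.injective (Subtype.ext hab)
  have hElt : ∀ k, E k < n := fun k =>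
    lt_of_le_of_lt (Polynomial.le_natDegree_of_mem_supp _ (hEmem k)) hfn
  set v : Fin w → L := fun k => α ^ E k with hv
  have hvinj : Function.Injective v := fun a b hab => hEinj (hα.pow_inj (hElt a) (hElt b) hab)
  have hdet : (Matrix.vandermonde v).transpose.det ≠ 0 := by
    rw [Matrix.det_transpose]
    exact (Matrix.det_vandermonde_ne_zero_iff).2 hvinj
  set c : Fin w → L := fun k => f.coeff (E k) * α ^ (m * E k) with hc
  have hmv : (Matrix.vandermonde v).transpose.mulVec c = 0 := by
    funext i
    have h1 := hvan i i.2
    rw [Polynomial.eval_eq_sum, Polynomial.sum_def] at h1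
    have h2 : ∑ k : Fin w, f.coeff (E k) * (α ^ (m + (i:ℕ))) ^ (E k)
        = ∑ e ∈ f.support, f.coeff e * (α ^ (m + (i:ℕ))) ^ e :=
      Finset.sum_bij (fun k _ => E k) (fun k _ => hEmem k) (fun a _ b _ h => hEinj h)
        (fun e he => ⟨f.support.equivFin ⟨e, he⟩, Finset.mem_univ _, by simp [hE]⟩)
        (fun k _ => rfl)
    have h3 : ∀ k : Fin w, (Matrix.vandermonde v).transpose i k * c k
        = f.coeff (E k) * (α ^ (m + (i:ℕ))) ^ (E k) := by
      intro k
      rw [Matrix.transpose_apply, Matrix.vandermonde_apply, hc, hv]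
      simp only [← pow_mul, ← pow_add]
      rw [mul_comm, mul_assoc, ← pow_add]
      congr 2
      ring
    simp only [Matrix.mulVec, dotProduct]
    rw [Finset.sum_congr rfl fun k _ => h3 k, h2]
    simpa using h1
  have hc0 : c = 0 := Matrix.eq_zero_of_mulVec_eq_zero hdet hmv
  have : f.support = ∅ := by
    by_contra hne
    obtain ⟨e, he⟩ := Finset.nonempty_of_ne_empty hne
    have hk : E (f.support.equivFin ⟨e, he⟩) = e := by simp [hE]
    have := congrFun hc0 (f.support.equivFin ⟨e, he⟩)
    rw [hc] at this
    simp only [hk, Pi.zero_apply, mul_eq_zero, pow_eq_zero_iff'] at this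
    rcases this with h | h
    · exact (Polynomial.mem_support_iff.1 he) h
    · exact hα0 h.1
  exact Polynomial.support_eq_empty.1 this


lemma shift_mod {L : Type*} [Field L] {n h : ℕ} (hn : 0 < n) (hh : h < n) (c : ℕ → L) :
    (X ^ h * ∑ j ∈ Finset.range n, C (c j) * X ^ j) %ₘ (X ^ n - 1) =
      ∑ j ∈ Finset.range n, C (c j) * X ^ ((j + h) % n) := by
  have hM : (X ^ n - 1 : L[X]).Monic := by
    simpa using Polynomial.monic_X_pow_sub_C (1 : L) hn.ne'
  have hdeg : ((X ^ n - 1 : L[X])).degree = n := by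
    simpa using Polynomial.degree_X_pow_sub_C hn (1 : L)
  set Q : L[X] := ∑ j ∈ Finset.range n, C (c j) * (if n ≤ j + h then X ^ (j + h - n) else 0) with hQ
  set R : L[X] := ∑ j ∈ Finset.range n, C (c j) * X ^ ((j + h) % n) with hR
  have hdecomp : X ^ h * ∑ j ∈ Finset.range n, C (c j) * X ^ j = R + (X ^ n - 1) * Q := by
    rw [Finset.mul_sum, hR, hQ, Finset.mul_sum, ← Finset.sum_add_distrib]
    apply Finset.sum_congr rfl
    intro j hj
    rw [Finset.mem_range] at hj
    by_cases hc : n ≤ j + h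
    · have hmod : (j + h) % n = j + h - n := by
        rw [Nat.mod_eq_sub_mod hc, Nat.mod_eq_of_lt (by omega)]
      rw [hmod, if_pos hc]
      have : X ^ h * (C (c j) * X ^ j) = C (c j) * (X ^ (j + h - n) * X ^ n) := by
        rw [← pow_add]
        have : j + h - n + n = j + h := by omega
        rw [this]; ring
      rw [this]; ring
    · rw [Nat.mod_eq_of_lt (by omega), if_neg hc]
      rw [mul_comm (X ^ h) _, mul_assoc, ← pow_add]
      ring
  have hdegR : R.degree < (X ^ n - 1 : L[X]).degree := by
    rw [hdeg, hR]
    apply lt_of_le_of_lt (Polynomial.degree_sum_le _ _)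
    rw [Finset.sup_lt_iff (by exact_mod_cast WithBot.bot_lt_coe n)]
    intro j hj
    apply lt_of_le_of_lt (Polynomial.degree_C_mul_X_pow_le _ _)
    exact_mod_cast Nat.cast_lt.2 (Nat.mod_lt _ hn)
  rw [hdecomp, add_modByMonic, (Polynomial.modByMonic_eq_self_iff hM).2 hdegR,
    (Polynomial.modByMonic_eq_zero_iff_dvd hM).2 ⟨Q, rfl⟩, add_zero]

/-- d*(φ_{α,f}) ≤ ω(f). -/
theorem stmt11 {L : Type*} [Field L] (p q s n : ℕ) (hp : p.Prime) [CharP L p]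
    (hq : q = p ^ s) (hs : 0 < s) (hn : 0 < n) (hcop : Nat.Coprime n q)
    (f : L[X]) (hf0 : f ≠ 0) (hfn : f.natDegree < n)
    (hfq : ∀ i, f.coeff i ^ q = f.coeff i)
    (α : L) (hα : IsPrimitiveRoot α n) :
    appDist n (dftP n α f) ≤ f.support.card := by
  classical
  have hpow : ∀ a : ℕ, α ^ (a % n) = α ^ a := by
    intro a
    conv_rhs => rw [← Nat.div_add_mod a n]
    rw [pow_add, pow_mul, hα.pow_eq_one, one_pow, one_mul]
  unfold appDist
  split
  · exact Nat.zero_le _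
  apply Finset.sup_le
  intro h hh
  rw [Finset.mem_range] at hh
  by_contra hcon
  push_neg at hcon
  set w := f.support.card with hw
  set R := (X ^ h * dftP n α f) %ₘ (X ^ n - 1) with hRdef
  -- hcon : w < n - R.natDegree
  have hdlt : R.natDegree + w < n := by omega
  have hRform : R = ∑ i ∈ Finset.range n, C (f.eval (α ^ ((i + (n - h)) % n))) * X ^ i := by
    rw [hRdef]
    unfold dftP
    rw [shift_mod hn hh]
    apply Finset.sum_nbij' (fun j => (j + h) % n) (fun i => (i + (n - h)) % n)
    · intro a _; exact Finset.mem_range.2 (Nat.mod_lt _ hn)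
    · intro a _; exact Finset.mem_range.2 (Nat.mod_lt _ hn)
    · intro a ha
      rw [Finset.mem_range] at ha
      rw [Nat.mod_add_mod]
      have : a + h + (n - h) = a + n := by omega
      rw [this, Nat.add_mod_right, Nat.mod_eq_of_lt ha]
    · intro a ha
      rw [Finset.mem_range] at ha
      rw [Nat.mod_add_mod]
      have : a + (n - h) + h = a + n := by omega
      rw [this, Nat.add_mod_right, Nat.mod_eq_of_lt ha]
    · intro a ha
      rw [Finset.mem_range] at ha
      congr 2
      rw [Nat.mod_add_mod]
      have : a + h + (n - h) = a + n := by omega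
      rw [this, Nat.add_mod_right, Nat.mod_eq_of_lt ha]
  have hcoeff : ∀ i < n, R.coeff i = f.eval (α ^ ((i + (n - h)) % n)) := by
    intro i hi
    rw [hRform]
    simp [Polynomial.finset_sum_coeff, Polynomial.coeff_C_mul, Polynomial.coeff_X_pow,
      Finset.sum_ite_eq, hi]
  have hf := vanish_consec hα hn f hfn ((n - w) + (n - h)) ?_
  · exact hf0 hf
  intro k hk
  have hi : n - w + k < n := by omega
  have h1 : R.coeff (n - w + k) = 0 :=
    Polynomial.coeff_eq_zero_of_natDegree_lt (by omega)
  have h2 := hcoeff (n - w + k) hi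
  rw [h1] at h2
  have h3 : n - w + (n - h) + k = n - w + k + (n - h) := by omega
  rw [← hpow, h3, ← h2]
end

section
/- Let C be a cyclic code in F_q[x]/(x^n−1) with idempotent generator e. If there exist h ∈ {0,...,n−1} and a primitive n-th root of unity α such that (x^h·φ_{α,e} mod x^n−1) divides x^n−1, then the minimum distance of C equals its maximum BCH bound Δ(C), and α is an optimal root of C. -/
open Polynomial

namespace Stmt12Aux

open Finset

variable {L : Type*} [Field L]

lemma monic_Xn_sub_one {n : ℕ} (hn : 0 < n) : (X ^ n - 1 : L[X]).Monic := by
  simpa using monic_X_pow_sub_C (1 : L) hn.ne'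

lemma degree_Xn_sub_one {n : ℕ} (hn : 0 < n) : (X ^ n - 1 : L[X]).degree = n := by
  simpa using degree_X_pow_sub_C hn (1 : L)

lemma eval_modByMonic_pow {n : ℕ} (hn : 0 < n) (f : L[X]) {x : L} (hx : x ^ n = 1) :
    (f %ₘ (X ^ n - 1)).eval x = f.eval x := by
  rw [modByMonic_eq_sub_mul_div f (X ^ n - 1)]
  simp [hx]

lemma coeff_sum_C_mul_X {n : ℕ} (v : ℕ → L) (i : ℕ) :
    (∑ j ∈ range n, C (v j) * X ^ j).coeff i = if i < n then v i else 0 := by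
  rw [finset_sum_coeff]
  simp only [coeff_C_mul, coeff_X_pow]
  split_ifs with hi
  · rw [Finset.sum_eq_single i]
    · simp
    · intro b _ hb; simp [Ne.symm hb]
    · intro hcon; exact absurd (mem_range.mpr hi) hcon
  · apply Finset.sum_eq_zero
    intro j hj
    simp only [mem_range] at hj
    have : i ≠ j := by omega
    simp [this]

lemma coeff_dftP {n : ℕ} (α : L) (f : L[X]) (i : ℕ) :
    (dftP n α f).coeff i = if i < n then f.eval (α ^ i) else 0 :=
  coeff_sum_C_mul_X _ i

lemma dftP_eval {α : L} {n : ℕ} (hα : IsPrimitiveRoot α n) (hn : 0 < n) {f : L[X]}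
    (hf : f.natDegree < n) {i : ℕ} (hi : i < n) :
    (dftP n α f).eval (α ^ i) = n * f.coeff ((n - i) % n) := by
  have sum_pow_prim : ∀ m : ℕ, ∑ j ∈ range n, (α ^ m) ^ j = if n ∣ m then (n : L) else 0 := by
    intro m
    split_ifs with hd
    · obtain ⟨k, rfl⟩ := hd
      simp [pow_mul, hα.pow_eq_one, mul_comm]
    · have h1 : α ^ m ≠ 1 := fun hcon => hd (hα.pow_eq_one_iff_dvd m |>.mp hcon)
      rw [geom_sum_eq h1]
      have : (α ^ m) ^ n = 1 := by rw [← pow_mul, mul_comm, pow_mul, hα.pow_eq_one, one_pow]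
      simp [this]
  unfold dftP
  rw [eval_finset_sum]
  simp only [eval_mul, eval_C, eval_pow, eval_X]
  have hev : ∀ j, f.eval (α ^ j) = ∑ m ∈ range n, f.coeff m * (α ^ j) ^ m := fun j =>
    eval_eq_sum_range' hf _
  calc ∑ j ∈ range n, f.eval (α ^ j) * (α ^ i) ^ j
      = ∑ j ∈ range n, ∑ m ∈ range n, f.coeff m * (α ^ (m + i)) ^ j := by
        refine Finset.sum_congr rfl fun j _ => ?_
        rw [hev j, Finset.sum_mul]
        refine Finset.sum_congr rfl fun m _ => ?_
        rw [mul_assoc, ← pow_mul, ← pow_mul, ← pow_add, ← pow_mul]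
        ring_nf
    _ = ∑ m ∈ range n, f.coeff m * ∑ j ∈ range n, (α ^ (m + i)) ^ j := by
        rw [Finset.sum_comm]
        exact Finset.sum_congr rfl fun m _ => by rw [Finset.mul_sum]
    _ = n * f.coeff ((n - i) % n) := by
        rw [Finset.sum_eq_single ((n - i) % n)]
        · have hd : n ∣ (n - i) % n + i := by
            rcases Nat.eq_zero_or_pos i with rfl | hi0
            · simp
            · have : (n - i) % n = n - i := Nat.mod_eq_of_lt (by omega)
              rw [this]
              have : n - i + i = n := by omega
              simp [this]
          rw [sum_pow_prim, if_pos hd, mul_comm]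
        · intro m hm hne
          have hmn : m < n := mem_range.mp hm
          have : ¬ n ∣ m + i := by
            intro hdvd
            rcases hdvd with ⟨k, hk⟩
            have hk01 : k = 0 ∨ k = 1 := by
              by_contra hcon
              push_neg at hcon
              have h2 : 2 ≤ k := by omega
              have := Nat.mul_le_mul_left n h2
              omega
            apply hne
            have hk' : m + i = 0 ∨ m + i = n := by
              rcases hk01 with rfl | rfl
              · left; omega
              · right; omega
            rcases Nat.eq_zero_or_pos i with rfl | hi0
            · rw [Nat.sub_zero, Nat.mod_self]; omega
            · rw [Nat.mod_eq_of_lt (by omega)]; omega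
          rw [sum_pow_prim, if_neg this, mul_zero]
        · intro hcon
          exact absurd (mem_range.mpr (Nat.mod_lt _ hn)) hcon

lemma X_pow_modByMonic {n : ℕ} (hn : 0 < n) (m : ℕ) :
    (X ^ m : L[X]) %ₘ (X ^ n - 1) = X ^ (m % n) := by
  have hmon := monic_Xn_sub_one (L := L) hn
  have hdvd : (X ^ n - 1 : L[X]) ∣ X ^ m - X ^ (m % n) := by
    have hrw : (X ^ m : L[X]) - X ^ (m % n) = X ^ (m % n) * ((X ^ n) ^ (m / n) - 1) := by
      rw [mul_sub, mul_one, ← pow_mul, ← pow_add]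
      congr 2
      have := Nat.mod_add_div m n
      omega
    rw [hrw]
    have := sub_dvd_pow_sub_pow (X ^ n : L[X]) 1 (m / n)
    rw [one_pow] at this
    exact this.mul_left _
  have key : (X ^ m : L[X]) = X ^ (m % n) + (X ^ m - X ^ (m % n)) := by ring
  rw [key, add_modByMonic, (modByMonic_eq_zero_iff_dvd hmon).mpr hdvd, add_zero,
    (modByMonic_eq_self_iff hmon).mpr]
  rw [degree_Xn_sub_one hn, degree_X_pow]
  exact_mod_cast Nat.mod_lt _ hn

lemma shift_modByMonic {n h : ℕ} (hn : 0 < n) (v : ℕ → L) :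
    (X ^ h * ∑ j ∈ range n, C (v j) * X ^ j) %ₘ (X ^ n - 1) =
      ∑ j ∈ range n, C (v j) * X ^ ((j + h) % n) := by
  rw [Finset.mul_sum]
  have hterm : ∀ j, (X : L[X]) ^ h * (C (v j) * X ^ j) = v j • X ^ (j + h) := by
    intro j
    rw [smul_eq_C_mul, pow_add]
    ring
  calc (∑ j ∈ range n, (X : L[X]) ^ h * (C (v j) * X ^ j)) %ₘ (X ^ n - 1)
      = (∑ j ∈ range n, v j • (X : L[X]) ^ (j + h)) %ₘ (X ^ n - 1) := by
        congr 1
        exact Finset.sum_congr rfl fun j _ => hterm j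
    _ = ∑ j ∈ range n, v j • ((X : L[X]) ^ (j + h) %ₘ (X ^ n - 1)) := by
        rw [← modByMonicHom_apply, map_sum]
        simp [modByMonicHom_apply, smul_modByMonic]
    _ = ∑ j ∈ range n, C (v j) * X ^ ((j + h) % n) := by
        refine Finset.sum_congr rfl fun j _ => ?_
        rw [X_pow_modByMonic hn, smul_eq_C_mul]

lemma coeff_shift_modByMonic {n h : ℕ} (hn : 0 < n) (hh : h ≤ n) (v : ℕ → L) {i : ℕ}
    (hi : i < n) :
    ((X ^ h * ∑ j ∈ range n, C (v j) * X ^ j) %ₘ (X ^ n - 1)).coeff i =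
      v ((i + (n - h)) % n) := by
  rw [shift_modByMonic hn]
  rw [finset_sum_coeff]
  simp only [coeff_C_mul, coeff_X_pow]
  rw [Finset.sum_eq_single ((i + (n - h)) % n)]
  · have : ((i + (n - h)) % n + h) % n = i := by
      rw [Nat.mod_add_mod]
      have : i + (n - h) + h = i + n := by omega
      rw [this, Nat.add_mod_right, Nat.mod_eq_of_lt hi]
    rw [this, if_pos rfl, mul_one]
  · intro j hj hne
    have hjn : j < n := mem_range.mp hj
    have : (j + h) % n ≠ i := by
      intro hcon
      apply hne
      have h2 : ((i + (n - h)) % n + h) % n = i := by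
        rw [Nat.mod_add_mod]
        have : i + (n - h) + h = i + n := by omega
        rw [this, Nat.add_mod_right, Nat.mod_eq_of_lt hi]
      have hmodeq : (j + h) % n = ((i + (n - h)) % n + h) % n := by rw [hcon, h2]
      have : j % n = (i + (n - h)) % n % n := by
        have := Nat.ModEq.add_right_cancel' h hmodeq
        exact this
      rw [Nat.mod_eq_of_lt hjn, Nat.mod_mod_of_dvd] at this
      · exact this
      · rfl
    simp [Ne.symm this]
  · intro hcon
    exact absurd (mem_range.mpr (Nat.mod_lt _ hn)) hcon

lemma bch_bound {β : L} {n : ℕ} (hβ : IsPrimitiveRoot β n) (hn : 0 < n) {c : L[X]} (hc : c ≠ 0)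
    (hdeg : c.natDegree < n) (l δ : ℕ) (hz : ∀ k < δ, c.eval (β ^ (l + k)) = 0) :
    δ < c.support.card := by
  by_contra hcon
  push_neg at hcon
  set w := c.support.card with hw
  have hw0 : 0 < w := Finset.card_pos.mpr (support_nonempty.mpr hc)
  have e := c.support.orderIsoOfFin (rfl : c.support.card = w)
  set σ : Fin w → ℕ := fun i => (e i : ℕ) with hσ
  have hmem : ∀ i, σ i ∈ c.support := fun i => (e i).2
  have hσlt : ∀ i, σ i < n := fun i =>
    lt_of_le_of_lt (le_natDegree_of_mem_supp _ (hmem i)) hdeg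
  have hσinj : Function.Injective σ := fun i j hij => by
    have : (e i : c.support) = (e j : c.support) := Subtype.ext hij
    exact e.injective this
  set u : Fin w → L := fun i => β ^ σ i with hu
  have huinj : Function.Injective u := fun i j hij =>
    hσinj (hβ.pow_inj (hσlt i) (hσlt j) hij)
  have hβ0 : β ≠ 0 := hβ.ne_zero hn.ne'
  set M : Matrix (Fin w) (Fin w) L := Matrix.of fun k i => β ^ (l * σ i) * u i ^ (k : ℕ)
    with hM
  have hdet : M.det ≠ 0 := by
    have hMeq : M = (Matrix.vandermonde u).transpose * Matrix.diagonal (fun i => β ^ (l * σ i)) := by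
      ext k i
      rw [Matrix.mul_diagonal, Matrix.transpose_apply, Matrix.vandermonde_apply]
      simp only [hM, Matrix.of_apply]
      ring
    rw [hMeq, Matrix.det_mul, Matrix.det_transpose, Matrix.det_diagonal,
      Matrix.det_vandermonde]
    apply mul_ne_zero
    · rw [Finset.prod_ne_zero_iff]
      intro i _
      rw [Finset.prod_ne_zero_iff]
      intro j hj
      exact sub_ne_zero.mpr fun hcon' => (Finset.mem_Ioi.mp hj).ne' (huinj hcon')
    · exact Finset.prod_ne_zero_iff.mpr fun i _ => pow_ne_zero _ hβ0
  have hmv : M.mulVec (fun i => c.coeff (σ i)) = 0 := by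
    funext k
    have hk : (k : ℕ) < δ := lt_of_lt_of_le k.2 hcon
    have heval : c.eval (β ^ (l + (k : ℕ))) = 0 := hz _ hk
    rw [eval_eq_sum, sum_def] at heval
    have hsum : ∑ m ∈ c.support, c.coeff m * (β ^ (l + (k : ℕ))) ^ m
        = ∑ i : Fin w, c.coeff (σ i) * (β ^ (l + (k : ℕ))) ^ (σ i) := by
      rw [← Finset.sum_coe_sort c.support]
      exact (Equiv.sum_comp e.toEquiv
        (fun x : c.support => c.coeff x * (β ^ (l + (k : ℕ))) ^ (x : ℕ))).symm
    simp only [Matrix.mulVec, dotProduct, Pi.zero_apply]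
    rw [hsum] at heval
    rw [← heval]
    refine Finset.sum_congr rfl fun i _ => ?_
    simp only [hM, Matrix.of_apply, hu, ← pow_mul, ← pow_add]
    rw [mul_comm]
    congr 1
    ring
  have hv0 := Matrix.eq_zero_of_mulVec_eq_zero hdet hmv
  have hi0 := congrFun hv0 ⟨0, hw0⟩
  exact (mem_support_iff.mp (hmem ⟨0, hw0⟩)) hi0

/-- single-shift term of the apparent distance is at most the weight -/
lemma term_le_wt {β : L} {n : ℕ} (hβ : IsPrimitiveRoot β n) (hn : 0 < n) {c : L[X]}
    (hc : c ≠ 0) (hdeg : c.natDegree < n) {h : ℕ} (hh : h < n) :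
    n - ((X ^ h * dftP n β c) %ₘ (X ^ n - 1)).natDegree ≤ c.support.card := by
  set r : L[X] := (X ^ h * dftP n β c) %ₘ (X ^ n - 1) with hr
  set d := r.natDegree with hd
  have hcard0 : 0 < c.support.card := Finset.card_pos.mpr (support_nonempty.mpr hc)
  by_cases hdn : d + 1 < n
  · have hz : ∀ k < n - 1 - d, c.eval (β ^ (d + 1 + (n - h) + k)) = 0 := by
      intro k hk
      have hjn : d + 1 + k < n := by omega
      have hcoeff : r.coeff (d + 1 + k) = 0 :=
        coeff_eq_zero_of_natDegree_lt (by omega)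
      have hcs := coeff_shift_modByMonic hn hh.le (fun j => c.eval (β ^ j)) hjn
      have hr2 : r.coeff (d + 1 + k) = c.eval (β ^ ((d + 1 + k + (n - h)) % n)) := by
        rw [hr]
        exact hcs
      rw [hr2] at hcoeff
      have hpow : β ^ ((d + 1 + k + (n - h)) % n) = β ^ (d + 1 + (n - h) + k) := by
        have hmod : β ^ ((d + 1 + k + (n - h)) % n) = β ^ (d + 1 + k + (n - h)) := by
          conv_rhs => rw [← Nat.mod_add_div (d + 1 + k + (n - h)) n]
          rw [pow_add, pow_mul, hβ.pow_eq_one, one_pow, mul_one]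
        rw [hmod]
        congr 1
        omega
      rw [hpow] at hcoeff
      exact hcoeff
    have := bch_bound hβ hn hc hdeg (d + 1 + (n - h)) (n - 1 - d) hz
    omega
  · omega

lemma dftP_ne_zero {β : L} {n : ℕ} (hβ : IsPrimitiveRoot β n) (hn : 0 < n) {c : L[X]}
    (hc : c ≠ 0) (hdeg : c.natDegree < n) : dftP n β c ≠ 0 := by
  intro h0
  have hev : ∀ k < n, c.eval (β ^ (0 + k)) = 0 := by
    intro k hk
    have := coeff_dftP (n := n) β c k
    rw [h0, coeff_zero, if_pos hk] at this
    rw [zero_add]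
    exact this.symm
  have hlt := bch_bound hβ hn hc hdeg 0 n hev
  have hle : c.support.card ≤ n := by
    calc c.support.card ≤ (range (c.natDegree + 1)).card :=
          Finset.card_le_card supp_subset_range_natDegree_succ
    _ = c.natDegree + 1 := card_range _
    _ ≤ n := hdeg
  omega

lemma appDist_le_wt {β : L} {n : ℕ} (hβ : IsPrimitiveRoot β n) (hn : 0 < n) {c : L[X]}
    (hc : c ≠ 0) (hdeg : c.natDegree < n) :
    appDist n (dftP n β c) ≤ c.support.card := by
  unfold appDist
  split_ifs with h0
  · exact Nat.zero_le _
  · exact Finset.sup_le fun h hh => term_le_wt hβ hn hc hdeg (mem_range.mp hh)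

open Classical in
lemma wt_le_of_dvd {α : L} {n : ℕ} (hα : IsPrimitiveRoot α n) (hn : 0 < n) (hn0 : (n : L) ≠ 0)
    {e : L[X]} (hdeg : e.natDegree < n) {h : ℕ} (hh : h < n)
    (hdvd : ((X ^ h * dftP n α e) %ₘ (X ^ n - 1)) ∣ (X ^ n - 1)) :
    e.support.card ≤ n - ((X ^ h * dftP n α e) %ₘ (X ^ n - 1)).natDegree := by
  set g : L[X] := (X ^ h * dftP n α e) %ₘ (X ^ n - 1) with hg
  set d := g.natDegree with hd
  have hXmon : (X ^ n - 1 : L[X]).Monic := by simpa using monic_X_pow_sub_C (1 : L) hn.ne'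
  have hXn0 : (X ^ n - 1 : L[X]) ≠ 0 := hXmon.ne_zero
  have hα0 : α ≠ 0 := hα.ne_zero hn.ne'
  -- roots of X^n - 1
  have hroots : (X ^ n - 1 : L[X]).roots = (Multiset.range n).map (fun i => α ^ i) := by
    have h1 : (X ^ n - 1 : L[X]) = X ^ n - C 1 := by rw [map_one]
    have h2 := hα.nthRoots_eq (one_pow n)
    rw [nthRoots] at h2
    rw [h1, h2]
    simp
  have hnodup : ((X ^ n - 1 : L[X]).roots).Nodup := by
    rw [hroots]
    refine Multiset.Nodup.map_on ?_ (Multiset.nodup_range n)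
    intro i hi j hj hij
    exact hα.pow_inj (Multiset.mem_range.mp hi) (Multiset.mem_range.mp hj) hij
  have hsplits : Splits (X ^ n - 1 : L[X]) := by
    rw [splits_iff_card_roots, hroots]
    simp only [Multiset.card_map, Multiset.card_range]
    have : (X ^ n - 1 : L[X]) = X ^ n - C 1 := by rw [map_one]
    rw [this, natDegree_X_pow_sub_C]
  have hgsplits : Splits g := hsplits.of_dvd hXn0 hdvd
  have hgcard : g.roots.card = d := splits_iff_card_roots.mp hgsplits
  have hgle : g.roots ≤ (X ^ n - 1 : L[X]).roots := roots.le_of_dvd hXn0 hdvd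
  have hgnodup : g.roots.Nodup := Multiset.nodup_of_le hgle hnodup
  -- eval formula for g
  have hgev : ∀ i < n, g.eval (α ^ i) = (α ^ i) ^ h * ((n : L) * e.coeff ((n - i) % n)) := by
    intro i hi
    have hx : (α ^ i) ^ n = 1 := by rw [← pow_mul, mul_comm, pow_mul, hα.pow_eq_one, one_pow]
    rw [hg, eval_modByMonic_pow hn _ hx, eval_mul, eval_pow, eval_X,
      dftP_eval hα hn hdeg hi]
  set A := (range n).filter (fun i => g.eval (α ^ i) = 0) with hA
  set B := (range n).filter (fun i => ¬ g.eval (α ^ i) = 0) with hB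
  have hAB : A.card + B.card = n := by
    rw [hA, hB, Finset.card_filter_add_card_filter_not, card_range]
  -- d ≤ A.card
  have hdA : d ≤ A.card := by
    rw [← hgcard, ← Multiset.toFinset_card_of_nodup hgnodup]
    apply Finset.card_le_card_of_injOn (fun ζ =>
      if hζ : ∃ i, i < n ∧ α ^ i = ζ then hζ.choose else 0)
    · intro ζ hζmem
      have hζroot : ζ ∈ g.roots := Multiset.mem_toFinset.mp hζmem
      have hζXn : ζ ∈ (X ^ n - 1 : L[X]).roots := Multiset.mem_of_le hgle hζroot
      have hex : ∃ i, i < n ∧ α ^ i = ζ := by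
        rw [hroots, Multiset.mem_map] at hζXn
        obtain ⟨i, hi, hiz⟩ := hζXn
        exact ⟨i, Multiset.mem_range.mp hi, hiz⟩
      simp only [Finset.mem_coe]
      rw [dif_pos hex]
      obtain ⟨h1, h2⟩ := hex.choose_spec
      rw [hA, Finset.mem_filter, mem_range]
      refine ⟨h1, ?_⟩
      rw [h2]
      exact isRoot_of_mem_roots hζroot
    · intro ζ hζmem ζ' hζmem' heq
      have hex : ∃ i, i < n ∧ α ^ i = ζ := by
        have hζXn := Multiset.mem_of_le hgle (Multiset.mem_toFinset.mp hζmem)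
        rw [hroots, Multiset.mem_map] at hζXn
        obtain ⟨i, hi, hiz⟩ := hζXn
        exact ⟨i, Multiset.mem_range.mp hi, hiz⟩
      have hex' : ∃ i, i < n ∧ α ^ i = ζ' := by
        have hζXn := Multiset.mem_of_le hgle (Multiset.mem_toFinset.mp hζmem')
        rw [hroots, Multiset.mem_map] at hζXn
        obtain ⟨i, hi, hiz⟩ := hζXn
        exact ⟨i, Multiset.mem_range.mp hi, hiz⟩
      simp only at heq
      rw [dif_pos hex, dif_pos hex'] at heq
      rw [← hex.choose_spec.2, ← hex'.choose_spec.2, heq]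
  -- wt e ≤ B.card
  have hwB : e.support.card ≤ B.card := by
    apply Finset.card_le_card_of_injOn (fun m => (n - m) % n)
    · intro m hm
      have hmn : m < n := lt_of_le_of_lt (le_natDegree_of_mem_supp _ hm) hdeg
      have hin : (n - m) % n < n := Nat.mod_lt _ hn
      simp only [Finset.mem_coe]
      rw [hB, Finset.mem_filter, mem_range]
      refine ⟨hin, ?_⟩
      rw [hgev _ hin]
      have hback : (n - (n - m) % n) % n = m := by
        rcases Nat.eq_zero_or_pos m with rfl | hm0
        · simp
        · have h1 : (n - m) % n = n - m := Nat.mod_eq_of_lt (by omega)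
          rw [h1]
          have h2 : n - (n - m) = m := by omega
          rw [h2, Nat.mod_eq_of_lt hmn]
      rw [hback]
      exact mul_ne_zero (pow_ne_zero _ (pow_ne_zero _ hα0))
        (mul_ne_zero hn0 (mem_support_iff.mp hm))
    · intro m hm m' hm' heq
      simp only at heq
      have hmn : m < n := lt_of_le_of_lt (le_natDegree_of_mem_supp _ (by exact_mod_cast hm)) hdeg
      have hmn' : m' < n := lt_of_le_of_lt (le_natDegree_of_mem_supp _ (by exact_mod_cast hm')) hdeg
      have hval : ∀ k, k < n → (n - k) % n = if k = 0 then 0 else n - k := by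
        intro k hk
        rcases Nat.eq_zero_or_pos k with rfl | hk0
        · simp
        · rw [if_neg hk0.ne', Nat.mod_eq_of_lt (by omega)]
      rw [hval m hmn, hval m' hmn'] at heq
      split_ifs at heq <;> omega
  omega

end Stmt12Aux



/-- if some cyclic shift of φ_{α,e} divides x^n−1 (e the idempotent
generator), then d(C) = Δ(C) (= d*(C) by Camion) and α is an optimal root of C. -/
theorem stmt12 {L : Type*} [Field L] (p q s n : ℕ) (hp : p.Prime) [CharP L p]
    (hq : q = p ^ s) (hs : 0 < s) (hn : 0 < n) (hcop : Nat.Coprime n q)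
    (Cc : CyclicCode L q n) (e : L[X]) (hgen : IsIdemGen e Cc)
    (h : ℕ) (hh : h < n) (α : L) (hα : IsPrimitiveRoot α n)
    (hdvd : ((X ^ h * dftP n α e) %ₘ (X ^ n - 1)) ∣ (X ^ n - 1)) :
    minDist Cc = appDistCode Cc ∧ IsOptimalRoot α Cc := by
  classical
  obtain ⟨he_mem, he_idem, he_gen⟩ := hgen
  have hn0 : (n : L) ≠ 0 := by
    intro hcon
    rw [CharP.cast_eq_zero_iff L p n] at hcon
    have hpq : p ∣ q := hq ▸ dvd_pow_self p hs.ne'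
    have h1 : p ∣ 1 := hcop ▸ Nat.dvd_gcd hcon hpq
    exact hp.one_lt.ne' (Nat.dvd_one.mp h1)
  by_cases hCz : ∀ c ∈ Cc.carrier, c = 0
  · -- degenerate case : the zero code
    have hAt : ∀ β : L, appDistAt β Cc = 0 := by
      intro β
      unfold appDistAt
      have hDe : { d | ∃ c ∈ Cc.carrier, c ≠ 0 ∧ d = appDist n (dftP n β c) } = ∅ := by
        apply Set.eq_empty_iff_forall_notMem.mpr
        rintro d ⟨c, hc, hc0, -⟩
        exact hc0 (hCz c hc)
      rw [hDe, Nat.sInf_empty]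
    have hmD : minDist Cc = 0 := by
      unfold minDist
      have hWe : { w | ∃ c ∈ Cc.carrier, c ≠ 0 ∧ w = c.support.card } = ∅ := by
        apply Set.eq_empty_iff_forall_notMem.mpr
        rintro w ⟨c, hc, hc0, -⟩
        exact hc0 (hCz c hc)
      rw [hWe, Nat.sInf_empty]
    have hCode : appDistCode Cc = 0 := by
      unfold appDistCode
      have hset : { d | ∃ β : L, IsPrimitiveRoot β n ∧ d = appDistAt β Cc } = {0} := by
        ext d
        simp only [Set.mem_setOf_eq, Set.mem_singleton_iff]
        constructor
        · rintro ⟨β, hβ, rfl⟩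
          exact hAt β
        · rintro rfl
          exact ⟨α, hα, (hAt α).symm⟩
      rw [hset, csSup_singleton]
    exact ⟨by rw [hmD, hCode], hα, by rw [hAt α, hCode]⟩
  · push_neg at hCz
    obtain ⟨c₀, hc₀mem, hc₀⟩ := hCz
    have he0 : e ≠ 0 := by
      intro hcon
      apply hc₀
      have hgen0 := he_gen c₀ hc₀mem
      rw [hcon, zero_mul, zero_modByMonic] at hgen0
      exact hgen0.symm
    have hedeg : e.natDegree < n := Cc.deg_lt e he_mem
    -- (A) the apparent distance at any primitive root is a lower bound for the min distance
    have hA : ∀ β : L, IsPrimitiveRoot β n → appDistAt β Cc ≤ minDist Cc := by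
      intro β hβ
      unfold minDist
      refine le_csInf ?_ ?_
      · exact ⟨c₀.support.card, ⟨c₀, hc₀mem, hc₀, rfl⟩⟩
      rintro w ⟨c, hc, hcne, rfl⟩
      calc appDistAt β Cc ≤ appDist n (dftP n β c) := Nat.sInf_le ⟨c, hc, hcne, rfl⟩
        _ ≤ c.support.card := Stmt12Aux.appDist_le_wt hβ hn hcne (Cc.deg_lt c hc)
    -- (B) the weight of e is a lower bound for all apparent distances at α
    have hwe : e.support.card ≤ n - ((X ^ h * dftP n α e) %ₘ (X ^ n - 1)).natDegree :=
      Stmt12Aux.wt_le_of_dvd hα hn hn0 hedeg hh hdvd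
    have hB : ∀ c ∈ Cc.carrier, c ≠ 0 → e.support.card ≤ appDist n (dftP n α c) := by
      intro c hc hcne
      have hcdeg := Cc.deg_lt c hc
      have hdft0 : dftP n α c ≠ 0 := Stmt12Aux.dftP_ne_zero hα hn hcne hcdeg
      have hrd : ((X ^ h * dftP n α c) %ₘ (X ^ n - 1)).natDegree ≤
          ((X ^ h * dftP n α e) %ₘ (X ^ n - 1)).natDegree := by
        rw [natDegree_le_iff_coeff_eq_zero]
        intro m hm
        by_cases hmn : m < n
        · have hcr : ((X ^ h * dftP n α c) %ₘ (X ^ n - 1)).coeff m =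
              c.eval (α ^ ((m + (n - h)) % n)) :=
            Stmt12Aux.coeff_shift_modByMonic hn hh.le _ hmn
          have hcg : ((X ^ h * dftP n α e) %ₘ (X ^ n - 1)).coeff m =
              e.eval (α ^ ((m + (n - h)) % n)) :=
            Stmt12Aux.coeff_shift_modByMonic hn hh.le _ hmn
          have hge : e.eval (α ^ ((m + (n - h)) % n)) = 0 := by
            rw [← hcg]
            exact coeff_eq_zero_of_natDegree_lt hm
          have hx1 : (α ^ ((m + (n - h)) % n)) ^ n = 1 := by
            rw [← pow_mul, mul_comm, pow_mul, hα.pow_eq_one, one_pow]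
          have hcgen := he_gen c hc
          rw [hcr, ← hcgen, Stmt12Aux.eval_modByMonic_pow hn _ hx1, eval_mul, hge, zero_mul]
        · apply coeff_eq_zero_of_degree_lt
          calc ((X ^ h * dftP n α c) %ₘ (X ^ n - 1)).degree
              < (X ^ n - 1 : L[X]).degree :=
                degree_modByMonic_lt _ (Stmt12Aux.monic_Xn_sub_one hn)
            _ = (n : WithBot ℕ) := Stmt12Aux.degree_Xn_sub_one hn
            _ ≤ (m : WithBot ℕ) := by exact_mod_cast Nat.le_of_not_lt hmn
      calc e.support.card
          ≤ n - ((X ^ h * dftP n α e) %ₘ (X ^ n - 1)).natDegree := hwe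
        _ ≤ n - ((X ^ h * dftP n α c) %ₘ (X ^ n - 1)).natDegree := Nat.sub_le_sub_left hrd n
        _ ≤ appDist n (dftP n α c) := by
            unfold appDist
            rw [if_neg hdft0]
            exact Finset.le_sup
              (f := fun h => n - ((X ^ h * dftP n α c) %ₘ (X ^ n - 1)).natDegree)
              (Finset.mem_range.mpr hh)
    -- minDist ≤ appDistAt α
    have hmin_le : minDist Cc ≤ appDistAt α Cc := by
      unfold appDistAt
      refine le_csInf ?_ ?_
      · exact ⟨appDist n (dftP n α e), ⟨e, he_mem, he0, rfl⟩⟩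
      rintro d ⟨c, hc, hcne, rfl⟩
      calc minDist Cc ≤ e.support.card := Nat.sInf_le ⟨e, he_mem, he0, rfl⟩
        _ ≤ appDist n (dftP n α c) := hB c hc hcne
    have hAt_le : appDistAt α Cc ≤ minDist Cc := hA α hα
    have hub : ∀ d ∈ { d | ∃ β : L, IsPrimitiveRoot β n ∧ d = appDistAt β Cc },
        d ≤ minDist Cc := by
      rintro d ⟨β, hβ, rfl⟩
      exact hA β hβ
    have hcode_le : appDistCode Cc ≤ minDist Cc := csSup_le ⟨appDistAt α Cc, α, hα, rfl⟩ hub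
    have hle_code : appDistAt α Cc ≤ appDistCode Cc :=
      le_csSup ⟨minDist Cc, fun d hd => hub d hd⟩ ⟨α, hα, rfl⟩
    have h1 : appDistAt α Cc = minDist Cc := le_antisymm hAt_le hmin_le
    have h2 : appDistCode Cc = minDist Cc := le_antisymm hcode_le (h1 ▸ hle_code)
    exact ⟨h2.symm, hα, by rw [h1, h2]⟩
end

section
/- Let C be a cyclic code in F_q[x]/(x^n−1) with idempotent generator e (or generator polynomial g). If d*(φ_{α,f}) = ω(f) for f ∈ {e, g} and some primitive n-th root of unity α, then d(C) = Δ(C) and α is an optimal root of C. -/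
open Polynomial

section AuxLemmas
variable {L : Type*} [Field L] {n : ℕ}

lemma coeff_dftP (n : ℕ) (α : L) (f : L[X]) {j : ℕ} (hj : j < n) :
    (dftP n α f).coeff j = f.eval (α ^ j) := by
  unfold dftP
  rw [Polynomial.finset_sum_coeff]
  rw [Finset.sum_eq_single j]
  · simp
  · intro b _ hb
    simp [coeff_X_pow, Ne.symm hb]
  · intro h
    exact absurd (Finset.mem_range.2 hj) h

lemma dftP_support_subset (n : ℕ) (α : L) (f : L[X]) :
    (dftP n α f).support ⊆ Finset.range n := by
  intro i hi
  by_contra h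
  have hin : ¬ i < n := fun hc => h (Finset.mem_range.2 hc)
  apply Polynomial.mem_support_iff.1 hi
  unfold dftP
  rw [Polynomial.finset_sum_coeff]
  apply Finset.sum_eq_zero
  intro b hb
  have : b ≠ i := fun hbi => hin (hbi ▸ Finset.mem_range.1 hb)
  simp [coeff_X_pow, Ne.symm this]

lemma natDegree_lt_of_support_subset_range (hn : 0 < n) {p : L[X]}
    (h : p.support ⊆ Finset.range n) : p.natDegree < n := by
  by_cases hp : p = 0
  · simpa [hp]
  · exact Finset.mem_range.1 (h (Polynomial.natDegree_mem_support_of_nonzero hp))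

lemma dftP_ne_zero (hn : 0 < n) {α : L} (hα : IsPrimitiveRoot α n) {c : L[X]}
    (hc0 : c ≠ 0) (hdeg : c.natDegree < n) : dftP n α c ≠ 0 := by
  classical
  intro h0
  have hz : ∀ j < n, c.eval (α ^ j) = 0 := by
    intro j hj
    have := coeff_dftP n α c hj
    rw [h0] at this
    simpa using this.symm
  have hsub : (Finset.range n).image (fun j => α ^ j) ⊆ c.roots.toFinset := by
    intro x hx
    obtain ⟨j, hj, rfl⟩ := Finset.mem_image.1 hx
    rw [Multiset.mem_toFinset, Polynomial.mem_roots hc0]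
    exact hz j (Finset.mem_range.1 hj)
  have hcard : ((Finset.range n).image (fun j => α ^ j)).card = n := by
    rw [Finset.card_image_of_injOn, Finset.card_range]
    intro a ha b hb hab
    exact hα.pow_inj (Finset.mem_range.1 ha) (Finset.mem_range.1 hb) hab
  have h1 : n ≤ c.roots.toFinset.card := hcard ▸ Finset.card_le_card hsub
  have h2 : c.roots.toFinset.card ≤ Multiset.card c.roots := Multiset.toFinset_card_le _
  have h3 := Polynomial.card_roots' c
  omega

lemma pow_mod_n {α : L} (hα1 : α ^ n = 1) (m : ℕ) : α ^ m = α ^ (m % n) := by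
  conv_lhs => rw [← Nat.div_add_mod m n]
  rw [pow_add, pow_mul, hα1, one_pow, one_mul]

lemma monic_Xn (hn : 0 < n) : (X ^ n - 1 : L[X]).Monic := by
  have := Polynomial.monic_X_pow_sub_C (1 : L) hn.ne'
  simpa using this

lemma degree_Xn (hn : 0 < n) : (X ^ n - 1 : L[X]).degree = n := by
  have := Polynomial.degree_X_pow_sub_C hn (1 : L)
  simpa using this

lemma modByMonic_eq_of (hn : 0 < n) {a r : L[X]}
    (hdvd : (X ^ n - 1 : L[X]) ∣ (a - r)) (hr : r.degree < n) :
    a %ₘ (X ^ n - 1) = r := by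
  have hm := monic_Xn (L := L) hn
  have h1 : (a - r) %ₘ (X ^ n - 1) = 0 := (Polynomial.modByMonic_eq_zero_iff_dvd hm).2 hdvd
  have h2 : r %ₘ (X ^ n - 1) = r :=
    (Polynomial.modByMonic_eq_self_iff hm).2 (by rw [degree_Xn hn]; exact hr)
  calc a %ₘ (X ^ n - 1) = ((a - r) + r) %ₘ (X ^ n - 1) := by ring_nf
    _ = (a - r) %ₘ (X ^ n - 1) + r %ₘ (X ^ n - 1) := Polynomial.add_modByMonic _ _
    _ = r := by rw [h1, h2, zero_add]

lemma eval_modByMonic_root (hn : 0 < n) (a : L[X]) {β : L} (hβ : β ^ n = 1) :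
    (a %ₘ (X ^ n - 1)).eval β = a.eval β := by
  conv_rhs => rw [← Polynomial.modByMonic_add_div a (X ^ n - 1)]
  simp [hβ]

lemma sigma_inj (hn : 0 < n) (h : ℕ) {a b : ℕ} (ha : a < n) (hb : b < n)
    (hab : (a + h) % n = (b + h) % n) : a = b := by
  have : a ≡ b [MOD n] := Nat.ModEq.add_right_cancel' h hab
  rwa [Nat.ModEq, Nat.mod_eq_of_lt ha, Nat.mod_eq_of_lt hb] at this

lemma shift_eq (hn : 0 < n) (h : ℕ) {B : L[X]} (hB : B.natDegree < n) :
    (X ^ h * B) %ₘ (X ^ n - 1) =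
      ∑ j ∈ Finset.range n, C (B.coeff j) * X ^ ((j + h) % n) := by
  apply modByMonic_eq_of hn
  · have hBsum : X ^ h * B = ∑ j ∈ Finset.range n, C (B.coeff j) * X ^ (j + h) := by
      conv_lhs => rw [Polynomial.as_sum_range' B n hB]
      rw [Finset.mul_sum]
      apply Finset.sum_congr rfl
      intro j _
      rw [← Polynomial.C_mul_X_pow_eq_monomial]
      ring
    rw [hBsum, ← Finset.sum_sub_distrib]
    apply Finset.dvd_sum
    intro j _
    have e1 : (X : L[X]) ^ (j + h) = (X ^ n) ^ ((j + h) / n) * X ^ ((j + h) % n) := by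
      rw [← pow_mul, ← pow_add, Nat.div_add_mod]
    have : C (B.coeff j) * X ^ (j + h) - C (B.coeff j) * X ^ ((j + h) % n)
        = C (B.coeff j) * X ^ ((j + h) % n) * ((X ^ n) ^ ((j + h) / n) - 1) := by
      rw [e1]; ring
    rw [this]
    apply Dvd.dvd.mul_left
    have := sub_dvd_pow_sub_pow (X ^ n : L[X]) 1 ((j + h) / n)
    simpa using this
  · apply lt_of_le_of_lt (Polynomial.degree_sum_le _ _)
    rw [Finset.sup_lt_iff (by exact_mod_cast WithBot.bot_lt_coe n)]
    intro j _
    apply lt_of_le_of_lt (Polynomial.degree_C_mul_X_pow_le _ _)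
    exact_mod_cast Nat.mod_lt _ hn

lemma shift_coeff (hn : 0 < n) (h : ℕ) {B : L[X]} (hB : B.natDegree < n) {j : ℕ} (hj : j < n) :
    ((X ^ h * B) %ₘ (X ^ n - 1)).coeff ((j + h) % n) = B.coeff j := by
  rw [shift_eq hn h hB, Polynomial.finset_sum_coeff]
  rw [Finset.sum_eq_single j]
  · simp
  · intro b hb hbj
    have : (b + h) % n ≠ (j + h) % n := fun hc =>
      hbj (sigma_inj hn h (Finset.mem_range.1 hb) hj hc)
    simp [coeff_X_pow, Ne.symm this]
  · intro hc
    exact absurd (Finset.mem_range.2 hj) hc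

lemma shift_support (hn : 0 < n) (h : ℕ) {B : L[X]} (hB : B.natDegree < n) :
    ((X ^ h * B) %ₘ (X ^ n - 1)).support ⊆
      (B.support).image (fun j => (j + h) % n) := by
  classical
  intro i hi
  rw [Polynomial.mem_support_iff] at hi
  rw [shift_eq hn h hB, Polynomial.finset_sum_coeff] at hi
  obtain ⟨j, hjmem, hj⟩ := Finset.exists_ne_zero_of_sum_ne_zero hi
  rw [Polynomial.coeff_C_mul, Polynomial.coeff_X_pow] at hj
  have hBj : B.coeff j ≠ 0 := fun hc => hj (by simp [hc])
  have hij : (j + h) % n = i := by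
    by_contra hc
    simp at hj
    exact hc hj.1.symm
  exact Finset.mem_image.2 ⟨j, Polynomial.mem_support_iff.2 hBj, hij⟩

lemma appDist_le_n (g : L[X]) : appDist n g ≤ n := by
  unfold appDist
  split
  · exact Nat.zero_le n
  · exact Finset.sup_le fun h _ => Nat.sub_le _ _

lemma appDist_mono (hn : 0 < n) {A B : L[X]}
    (hA : A.support ⊆ Finset.range n) (hBs : B.support ⊆ Finset.range n)
    (hAB : B.support ⊆ A.support) (hB0 : B ≠ 0) : appDist n A ≤ appDist n B := by
  have hAdeg : A.natDegree < n := natDegree_lt_of_support_subset_range hn hA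
  have hBdeg : B.natDegree < n := natDegree_lt_of_support_subset_range hn hBs
  have hA0 : A ≠ 0 := by
    intro hc
    obtain ⟨j, hj⟩ := Polynomial.support_nonempty.2 hB0
    have := hAB hj
    rw [hc] at this
    simp at this
  unfold appDist
  rw [if_neg hA0, if_neg hB0]
  apply Finset.sup_le
  intro h hh
  apply Finset.le_sup_of_le hh
  apply Nat.sub_le_sub_left
  have hsB0 : (X ^ h * B) %ₘ (X ^ n - 1) ≠ 0 := by
    obtain ⟨j, hjs⟩ := Finset.nonempty_iff_ne_empty.2
      (fun he => hB0 (Polynomial.support_eq_empty.1 he))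
    intro hc
    have hjn : j < n := Finset.mem_range.1 (hBs hjs)
    have := shift_coeff hn h hBdeg hjn
    rw [hc] at this
    exact Polynomial.mem_support_iff.1 hjs this.symm
  have hmem := Polynomial.natDegree_mem_support_of_nonzero hsB0
  have := shift_support hn h hBdeg hmem
  obtain ⟨j, hjB, hji⟩ := Finset.mem_image.1 this
  have hjn : j < n := Finset.mem_range.1 (hBs hjB)
  have hAcoeff : ((X ^ h * A) %ₘ (X ^ n - 1)).coeff
      (((X ^ h * B) %ₘ (X ^ n - 1)).natDegree) ≠ 0 := by
    rw [← hji, shift_coeff hn h hAdeg hjn]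
    exact Polynomial.mem_support_iff.1 (hAB hjB)
  exact Polynomial.le_natDegree_of_ne_zero hAcoeff

lemma bch (hn : 0 < n) {α : L} (hα : IsPrimitiveRoot α n) {c : L[X]} (hc : c ≠ 0)
    (hdeg : c.natDegree < n) (m0 : ℕ)
    (hz : ∀ r < c.support.card, c.eval (α ^ (m0 + r)) = 0) : False := by
  classical
  set S := c.support with hS
  set w := S.card with hwdef
  have hw : 0 < w := Finset.card_pos.2 (Polynomial.support_nonempty.2 hc)
  set eq := S.equivFin with heq
  set ι : Fin w → ℕ := fun k => ((eq.symm k : S) : ℕ) with hι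
  have hιS : ∀ k, ι k ∈ S := fun k => (eq.symm k).2
  have hιn : ∀ k, ι k < n := fun k =>
    lt_of_le_of_lt (Polynomial.le_natDegree_of_mem_supp _ (hιS k)) hdeg
  have hιinj : Function.Injective ι := fun a b hab =>
    eq.symm.injective (Subtype.ext hab)
  set v : Fin w → L := fun k => α ^ ι k with hv
  have hvinj : Function.Injective v := fun a b hab =>
    hιinj (hα.pow_inj (hιn a) (hιn b) hab)
  set M : Matrix (Fin w) (Fin w) L := (Matrix.vandermonde v).transpose with hM
  have hdet : M.det ≠ 0 := by
    rw [hM, Matrix.det_transpose, Matrix.det_vandermonde]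
    apply Finset.prod_ne_zero_iff.2
    intro i _
    apply Finset.prod_ne_zero_iff.2
    intro j hj
    exact sub_ne_zero.2 fun hc' => (Finset.mem_Ioi.1 hj).ne' (hvinj hc')
  set y : Fin w → L := fun k => c.coeff (ι k) * α ^ (ι k * m0) with hy
  have hmul : M.mulVec y = 0 := by
    funext r
    have hr : (r : ℕ) < w := r.isLt
    have hcalc : M.mulVec y r = ∑ k : Fin w, c.coeff (ι k) * (α ^ (m0 + (r : ℕ))) ^ (ι k) := by
      unfold Matrix.mulVec dotProduct
      apply Finset.sum_congr rfl
      intro k _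
      show (v k) ^ (r : ℕ) * (c.coeff (ι k) * α ^ (ι k * m0)) = _
      rw [hv]
      rw [← pow_mul, ← pow_mul]
      rw [show (m0 + (r : ℕ)) * ι k = ι k * (r : ℕ) + ι k * m0 by ring]
      rw [pow_add]
      ring
    rw [hcalc]
    have : ∑ k : Fin w, c.coeff (ι k) * (α ^ (m0 + (r : ℕ))) ^ (ι k)
        = ∑ i ∈ S, c.coeff i * (α ^ (m0 + (r : ℕ))) ^ i := by
      rw [← Finset.sum_coe_sort S (fun i => c.coeff i * (α ^ (m0 + (r : ℕ))) ^ (i : ℕ))]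
      exact Equiv.sum_comp eq.symm (fun (i : S) => c.coeff (i : ℕ) * (α ^ (m0 + (r : ℕ))) ^ (i : ℕ))
    rw [this]
    have heval : c.eval (α ^ (m0 + (r : ℕ))) = ∑ i ∈ S, c.coeff i * (α ^ (m0 + (r : ℕ))) ^ i := by
      rw [Polynomial.eval_eq_sum, Polynomial.sum_def]
    rw [← heval, hz _ hr]
    rfl
  have hy0 := Matrix.eq_zero_of_mulVec_eq_zero hdet hmul
  have k0 : Fin w := ⟨0, hw⟩
  have := congrFun hy0 k0
  rw [hy] at this
  simp only [Pi.zero_apply, mul_eq_zero] at this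
  rcases this with h1 | h2
  · exact Polynomial.mem_support_iff.1 (hιS k0) h1
  · exact pow_ne_zero _ (hα.ne_zero hn.ne') h2

lemma appDist_dftP_le (hn : 0 < n) {α : L} (hα : IsPrimitiveRoot α n) {c : L[X]}
    (hc0 : c ≠ 0) (hdeg : c.natDegree < n) :
    appDist n (dftP n α c) ≤ c.support.card := by
  set B := dftP n α c with hB
  have hB0 : B ≠ 0 := dftP_ne_zero hn hα hc0 hdeg
  have hBdeg : B.natDegree < n :=
    natDegree_lt_of_support_subset_range hn (dftP_support_subset n α c)
  unfold appDist
  rw [if_neg hB0]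
  apply Finset.sup_le
  intro h _
  set D := ((X ^ h * B) %ₘ (X ^ n - 1)).natDegree with hD
  by_contra hcon
  push_neg at hcon
  set w := c.support.card with hw
  have hwD : w + D < n := by omega
  apply bch hn hα hc0 hdeg (D + 1 + (n - h % n))
  intro r hr
  set i := D + 1 + r with hi
  have hin : i < n := by omega
  set j := (i + (n - h % n)) % n with hj
  have hjn : j < n := Nat.mod_lt _ hn
  have hσ : (j + h) % n = i := by
    have h1 : (j + h) % n = (i + (n - h % n) + h) % n := by
      rw [hj, Nat.mod_add_mod]
    rw [h1]
    have h2 : i + (n - h % n) + h = i + n * (1 + h / n) := by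
      rw [Nat.mul_add, Nat.mul_one]
      generalize hq : h / n = Q
      generalize hu : h % n = U
      have hdm : n * Q + U = h := by rw [← hq, ← hu]; exact Nat.div_add_mod h n
      have hU : U < n := hu ▸ Nat.mod_lt _ hn
      generalize hp : n * Q = P at hdm ⊢
      omega
    rw [h2, Nat.add_mul_mod_self_left, Nat.mod_eq_of_lt hin]
  have hzero : ((X ^ h * B) %ₘ (X ^ n - 1)).coeff i = 0 :=
    Polynomial.coeff_eq_zero_of_natDegree_lt (by omega)
  have hBj : B.coeff j = 0 := by
    rw [← shift_coeff hn h hBdeg hjn, hσ, hzero]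
  have hevalj : c.eval (α ^ j) = 0 := by
    rw [← coeff_dftP n α c hjn]; exact hBj
  have hαpow : α ^ (D + 1 + (n - h % n) + r) = α ^ j := by
    rw [pow_mod_n hα.pow_eq_one (D + 1 + (n - h % n) + r), hj]
    have harg : D + 1 + (n - h % n) + r = i + (n - h % n) := by omega
    rw [harg]
  rw [hαpow, hevalj]

end AuxLemmas

/-- if d*(φ_{α,f}) = ω(f) for f the idempotent generator or the generator
polynomial of C, then d(C) = Δ(C) (= d*(C) by Camion) and α is an optimal root of C. -/
theorem stmt13 {L : Type*} [Field L] (p q s n : ℕ) (hp : p.Prime) [CharP L p]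
    (hq : q = p ^ s) (hs : 0 < s) (hn : 0 < n) (hcop : Nat.Coprime n q)
    (Cc : CyclicCode L q n) (e g : L[X])
    (he : IsIdemGen e Cc) (hg : IsGenPoly g Cc)
    (f : L[X]) (hf : f = e ∨ f = g)
    (α : L) (hα : IsPrimitiveRoot α n)
    (hd : appDist n (dftP n α f) = f.support.card) :
    minDist Cc = appDistCode Cc ∧ IsOptimalRoot α Cc := by
  classical
  have hg0 : g ≠ 0 := hg.2.1.ne_zero
  have hfC : f ∈ Cc.carrier := by rcases hf with rfl | rfl; exacts [he.1, hg.1]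
  have hf0 : f ≠ 0 := by
    rcases hf with rfl | rfl
    · intro hc
      have h1 := he.2.2 g hg.1
      rw [hc] at h1
      simp at h1
      exact hg0 h1.symm
    · exact hg0
  have hdegf : f.natDegree < n := Cc.deg_lt f hfC
  have hαn : α ^ n = 1 := hα.pow_eq_one
  have hsup : ∀ c ∈ Cc.carrier, (dftP n α c).support ⊆ (dftP n α f).support := by
    intro c hc i hi
    have hin : i < n := Finset.mem_range.1 (dftP_support_subset n α c hi)
    have hci : c.eval (α ^ i) ≠ 0 := by
      rw [← coeff_dftP n α c hin]; exact Polynomial.mem_support_iff.1 hi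
    rw [Polynomial.mem_support_iff, coeff_dftP n α f hin]
    have hβn : (α ^ i) ^ n = 1 := by rw [← pow_mul, mul_comm, pow_mul, hαn, one_pow]
    intro hfz
    apply hci
    rcases hf with rfl | rfl
    · have hcc := he.2.2 c hc
      have hev := eval_modByMonic_root hn (f * c) hβn
      rw [hcc] at hev
      rw [hev, Polynomial.eval_mul, hfz, zero_mul]
    · obtain ⟨u, hu⟩ := hg.2.2.2.1 c hc
      rw [hu, Polynomial.eval_mul, hfz, zero_mul]
  have key2 : ∀ c ∈ Cc.carrier, c ≠ 0 →
      appDist n (dftP n α f) ≤ appDist n (dftP n α c) := by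
    intro c hc hc0
    exact appDist_mono hn (dftP_support_subset n α f) (dftP_support_subset n α c)
      (hsup c hc) (dftP_ne_zero hn hα hc0 (Cc.deg_lt c hc))
  have key1 : ∀ (α' : L), IsPrimitiveRoot α' n → ∀ c ∈ Cc.carrier, c ≠ 0 →
      appDist n (dftP n α' c) ≤ c.support.card := fun α' hα' c hc hc0 =>
    appDist_dftP_le hn hα' hc0 (Cc.deg_lt c hc)
  have hWne : {w | ∃ c ∈ Cc.carrier, c ≠ 0 ∧ w = c.support.card}.Nonempty :=
    ⟨f.support.card, f, hfC, hf0, rfl⟩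
  have hminle : minDist Cc ≤ f.support.card := Nat.sInf_le ⟨f, hfC, hf0, rfl⟩
  have hb : ∀ α' : L, IsPrimitiveRoot α' n → appDistAt α' Cc ≤ minDist Cc := by
    intro α' hα'
    obtain ⟨c0, hc0C, hc00, hc0w⟩ := Nat.sInf_mem hWne
    calc appDistAt α' Cc ≤ appDist n (dftP n α' c0) := Nat.sInf_le ⟨c0, hc0C, hc00, rfl⟩
      _ ≤ c0.support.card := key1 α' hα' c0 hc0C hc00
      _ = minDist Cc := hc0w.symm
  have hc_le : f.support.card ≤ appDistAt α Cc := by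
    apply le_csInf
    · exact ⟨appDist n (dftP n α f), f, hfC, hf0, rfl⟩
    rintro d ⟨c, hc, hc0, rfl⟩
    rw [← hd]
    exact key2 c hc hc0
  have hd_le : appDistAt α Cc ≤ f.support.card := by
    have h1 : appDistAt α Cc ≤ appDist n (dftP n α f) := Nat.sInf_le ⟨f, hfC, hf0, rfl⟩
    rwa [hd] at h1
  have hAα : appDistAt α Cc = f.support.card := le_antisymm hd_le hc_le
  have hbdd : BddAbove {d | ∃ α' : L, IsPrimitiveRoot α' n ∧ d = appDistAt α' Cc} := by
    refine ⟨n, ?_⟩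
    rintro d ⟨α', hα', rfl⟩
    calc appDistAt α' Cc ≤ appDist n (dftP n α' f) := Nat.sInf_le ⟨f, hfC, hf0, rfl⟩
      _ ≤ n := appDist_le_n _
  have hcode_ge : appDistAt α Cc ≤ appDistCode Cc := le_csSup hbdd ⟨α, hα, rfl⟩
  have hcode_le : appDistCode Cc ≤ appDistAt α Cc := by
    apply csSup_le
    · exact ⟨appDistAt α Cc, α, hα, rfl⟩
    rintro d ⟨α', hα', rfl⟩
    calc appDistAt α' Cc ≤ minDist Cc := hb α' hα'
      _ ≤ f.support.card := hminle
      _ = appDistAt α Cc := hAα.symm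
  have hcode : appDistCode Cc = appDistAt α Cc := le_antisymm hcode_le hcode_ge
  have hmin : minDist Cc = appDistAt α Cc :=
    le_antisymm (hAα ▸ hminle) (hb α hα)
  exact ⟨hmin.trans hcode.symm, ⟨hα, hcode.symm⟩⟩
end

section
/- Let h be an irreducible factor of x^n−1 in F_{q'}[x] (F_q ⊆ F_{q'} ⊆ L), α a primitive n-th root of unity, g = (x^n−1)/h. If there are positive integers j, t with g(α^j) = α^t and gcd(j, n/gcd(q−1, n)) divides t, then there exists k ∈ {0,...,n−1} such that the F_q-cyclic code C generated by φ^{−1}_{α, x^k·g mod x^n−1} has length n and satisfies Δ(C) = d(C). -/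
open Polynomial

namespace S17
open Finset
variable {L : Type*} [Field L] {n : ℕ}

lemma zmod_inj {n x y : ℕ} (hx : x < n) (hy : y < n) (h : (x : ZMod n) = y) : x = y := by
  have := (ZMod.natCast_eq_natCast_iff x y n).1 h
  rwa [Nat.ModEq, Nat.mod_eq_of_lt hx, Nat.mod_eq_of_lt hy] at this

lemma zmod_mod {n x : ℕ} : ((x % n : ℕ) : ZMod n) = (x : ZMod n) := by
  exact_mod_cast ZMod.natCast_mod x n

lemma pow_mod' {α : L} (hα : α ^ n = 1) (x : ℕ) : α ^ (x % n) = α ^ x := by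
  conv_rhs => rw [← Nat.mod_add_div x n]
  rw [pow_add, pow_mul, hα, one_pow, mul_one]

lemma pow_congr {α : L} (hα : α ^ n = 1) {x y : ℕ} (h : x % n = y % n) :
    α ^ x = α ^ y := by rw [← pow_mod' hα x, ← pow_mod' hα y, h]

lemma pow_congr_zmod (hn : 0 < n) {α : L} (hα : α ^ n = 1) {x y : ℕ}
    (h : (x : ZMod n) = y) : α ^ x = α ^ y :=
  pow_congr hα ((ZMod.natCast_eq_natCast_iff x y n).1 h)

lemma modEq_helper (hn : 0 < n) (p r : L[X]) (hdvd : (X ^ n - 1 : L[X]) ∣ p - r)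
    (hdeg : r.degree < n) : p %ₘ (X ^ n - 1) = r := by
  have hM : (X ^ n - 1 : L[X]).Monic := by
    simpa using monic_X_pow_sub_C (1 : L) hn.ne'
  have hdegM : (X ^ n - 1 : L[X]).degree = n := by
    simpa using degree_X_pow_sub_C hn (1 : L)
  rw [Polynomial.modByMonic_eq_of_dvd_sub hM hdvd,
    (Polynomial.modByMonic_eq_self_iff hM).2 (by rwa [hdegM])]

lemma coeff_sum_zero {n : ℕ} (v : ℕ → L) (σ : ℕ → ℕ) (idx : ℕ)
    (hid : ∀ j ∈ range n, σ j ≠ idx) :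
    (∑ j ∈ range n, C (v j) * X ^ σ j).coeff idx = 0 := by
  rw [finset_sum_coeff]
  refine Finset.sum_eq_zero fun j hj => ?_
  rw [coeff_C_mul, coeff_X_pow, if_neg (fun hc => hid j hj hc.symm), mul_zero]

lemma coeff_sum_single {n : ℕ} (v : ℕ → L) (σ : ℕ → ℕ) (j₀ : ℕ) (hj₀ : j₀ ∈ range n)
    (huniq : ∀ j ∈ range n, j ≠ j₀ → σ j ≠ σ j₀) :
    (∑ j ∈ range n, C (v j) * X ^ σ j).coeff (σ j₀) = v j₀ := by
  rw [finset_sum_coeff, Finset.sum_eq_single j₀]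
  · rw [coeff_C_mul, coeff_X_pow, if_pos rfl, mul_one]
  · intro j hj hne
    rw [coeff_C_mul, coeff_X_pow, if_neg (fun hc => huniq j hj hne hc.symm), mul_zero]
  · intro hni; exact absurd hj₀ hni

lemma degree_sum_lt {n : ℕ} (v : ℕ → L) (σ : ℕ → ℕ) (hσ : ∀ j < n, σ j < n) :
    (∑ j ∈ range n, C (v j) * X ^ σ j).degree < (n : WithBot ℕ) := by
  rw [Polynomial.degree_lt_iff_coeff_zero]
  intro m hm
  refine coeff_sum_zero v σ m fun j hj => ?_
  have := hσ j (mem_range.1 hj)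
  omega

lemma natDegree_sum_lt {n : ℕ} (hn : 0 < n) (v : ℕ → L) (σ : ℕ → ℕ) (hσ : ∀ j < n, σ j < n) :
    (∑ j ∈ range n, C (v j) * X ^ σ j).natDegree < n := by
  by_cases h0 : (∑ j ∈ range n, C (v j) * X ^ σ j) = 0
  · rw [h0]; simpa using hn
  · exact (Polynomial.natDegree_lt_iff_degree_lt h0).2 (degree_sum_lt v σ hσ)

lemma shiftMod (hn : 0 < n) (G : L[X]) (hG : G.natDegree < n) (h : ℕ) :
    (X ^ h * G) %ₘ (X ^ n - 1) =
      ∑ j ∈ range n, C (G.coeff j) * X ^ ((h + j) % n) := by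
  refine modEq_helper hn _ _ ?_ (degree_sum_lt _ _ fun j _ => Nat.mod_lt _ hn)
  have hrep : X ^ h * G = ∑ j ∈ range n, C (G.coeff j) * X ^ (h + j) := by
    conv_lhs => rw [G.as_sum_range' n hG]
    rw [Finset.mul_sum]
    refine Finset.sum_congr rfl fun j _ => ?_
    rw [← C_mul_X_pow_eq_monomial, pow_add]; ring
  rw [hrep, ← Finset.sum_sub_distrib]
  refine Finset.dvd_sum fun j _ => ?_
  have hfac : C (G.coeff j) * X ^ (h + j) - C (G.coeff j) * X ^ ((h + j) % n) =
      C (G.coeff j) * X ^ ((h + j) % n) * ((X ^ n) ^ ((h + j) / n) - 1) := by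
    rw [mul_sub, mul_one, mul_assoc, ← pow_mul, ← pow_add, Nat.mod_add_div]
  rw [hfac]
  exact Dvd.dvd.mul_left (by simpa using sub_dvd_pow_sub_pow ((X : L[X]) ^ n) 1 ((h + j) / n)) _

lemma coeff_shiftMod (hn : 0 < n) (G : L[X]) (hG : G.natDegree < n) (h idx : ℕ)
    (hidx : idx < n) :
    ((X ^ h * G) %ₘ (X ^ n - 1)).coeff idx = G.coeff ((idx + (n - h % n)) % n) := by
  rw [shiftMod hn G hG h]
  set j₀ := (idx + (n - h % n)) % n with hj₀
  have hj₀n : j₀ < n := Nat.mod_lt _ hn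
  have hzero : ((n : ℕ) : ZMod n) = 0 := ZMod.natCast_self n
  have hkey : (h + j₀) % n = idx := by
    refine zmod_inj (Nat.mod_lt _ hn) hidx ?_
    rw [zmod_mod, hj₀]
    push_cast [zmod_mod, Nat.cast_sub (le_of_lt (Nat.mod_lt h hn))]
    rw [hzero]
    ring
  have huq : ∀ jj ∈ range n, jj ≠ j₀ → (h + jj) % n ≠ (h + j₀) % n := by
    intro jj hjj hne hc
    refine hne (zmod_inj (mem_range.1 hjj) hj₀n ?_)
    have hcast : ((h + jj : ℕ) : ZMod n) = ((h + j₀ : ℕ) : ZMod n) := by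
      rw [← zmod_mod, hc, zmod_mod]
    push_cast at hcast
    linear_combination hcast
  have := coeff_sum_single (L := L) (fun j => G.coeff j) (fun j => (h + j) % n) j₀
    (mem_range.2 hj₀n) huq
  rw [hkey] at this
  rw [this]

lemma sparse_vanish {β : L} (hβ : IsPrimitiveRoot β n) :
    ∀ (N : ℕ) (I : Finset ℕ), I.card = N → I.Nonempty → (∀ i ∈ I, i < n) →
    ∀ (a : ℕ → L), (∀ i ∈ I, a i ≠ 0) →
    (∀ r < I.card, ∑ i ∈ I, a i * (β ^ r) ^ i = 0) → False := by
  intro N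
  induction N with
  | zero =>
    intro I hcard hne _ _ _ _
    rw [Finset.card_eq_zero] at hcard
    exact Finset.not_nonempty_empty (hcard ▸ hne)
  | succ N ih =>
    intro I hcard hne hIlt a ha hvan
    rcases Nat.eq_zero_or_pos N with hN | hN
    · subst hN
      obtain ⟨i₀, hi₀⟩ := Finset.card_eq_one.1 hcard
      have := hvan 0 (by rw [hcard]; norm_num)
      rw [hi₀, Finset.sum_singleton, pow_zero, one_pow, mul_one] at this
      exact ha i₀ (by rw [hi₀]; exact Finset.mem_singleton_self i₀) this
    · set imax := I.max' hne with himax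
      have himem : imax ∈ I := I.max'_mem hne
      set I' := I.erase imax with hI'
      have hcard' : I'.card = N := by
        rw [hI', Finset.card_erase_of_mem himem, hcard]; rfl
      have hne' : I'.Nonempty := Finset.card_pos.1 (by rw [hcard']; exact hN)
      refine ih I' hcard' hne' (fun i hi => hIlt i (Finset.mem_of_mem_erase hi))
        (fun i => a i * (β ^ i - β ^ imax)) (fun i hi => ?_) (fun r hr => ?_)
      · refine mul_ne_zero (ha i (Finset.mem_of_mem_erase hi)) (sub_ne_zero.2 fun hc => ?_)
        exact (Finset.ne_of_mem_erase hi)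
          (hβ.pow_inj (hIlt i (Finset.mem_of_mem_erase hi)) (hIlt imax himem) hc)
      · rw [hI', Finset.sum_erase_eq_sub himem]
        have hterm : ∀ i, a i * (β ^ i - β ^ imax) * (β ^ r) ^ i =
            a i * (β ^ (r + 1)) ^ i - β ^ imax * (a i * (β ^ r) ^ i) := by
          intro i; rw [pow_succ, mul_pow]; ring
        have hsum2 : ∑ i ∈ I, a i * (β ^ i - β ^ imax) * (β ^ r) ^ i = 0 := by
          rw [Finset.sum_congr rfl fun i _ => hterm i, Finset.sum_sub_distrib,
            ← Finset.mul_sum]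
          rw [hvan (r + 1) (by omega), hvan r (by omega), mul_zero, sub_zero]
        rw [hsum2]
        simp [sub_self]

lemma dftP_coeff {β : L} (c : L[X]) {j : ℕ} (hj : j < n) :
    (dftP n β c).coeff j = c.eval (β ^ j) := by
  have := coeff_sum_single (L := L) (fun j => c.eval (β ^ j)) (fun j => j) j
    (mem_range.2 hj) (fun j' _ hne => hne)
  simpa [dftP] using this

lemma dftP_natDegree_lt (hn : 0 < n) {β : L} (c : L[X]) :
    (dftP n β c).natDegree < n := by
  have := natDegree_sum_lt hn (fun j => c.eval (β ^ j)) (fun j => j) (fun j hj => hj)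
  simpa [dftP] using this

lemma eval_root_pow {β : L} (hβ : β ^ n = 1) : ∀ i : ℕ, (β ^ i) ^ n = 1 := by
  intro i; rw [← pow_mul, mul_comm, pow_mul, hβ, one_pow]

lemma root_ne_zero (hn : 0 < n) {β : L} (hβ : β ^ n = 1) : β ≠ 0 := by
  intro h; rw [h, zero_pow hn.ne'] at hβ; exact zero_ne_one hβ

lemma eval_supp_sum (c : L[X]) (x : L) : c.eval x = ∑ i ∈ c.support, c.coeff i * x ^ i := by
  rw [Polynomial.eval_eq_sum, Polynomial.sum_def]

lemma supp_card_le {n : ℕ} (c : L[X]) (hcd : c.natDegree < n) : c.support.card ≤ n := by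
  have : c.support ⊆ range n := fun i hi =>
    mem_range.2 (lt_of_le_of_lt (Polynomial.le_natDegree_of_mem_supp i hi) hcd)
  simpa using Finset.card_le_card this

lemma eval_vanish_all (hn : 0 < n) {β : L} (hβ : IsPrimitiveRoot β n) (c : L[X])
    (hcd : c.natDegree < n) (hvan : ∀ j < n, c.eval (β ^ j) = 0) : c = 0 := by
  by_contra hc0
  refine sparse_vanish hβ c.support.card c.support rfl
    (Polynomial.support_nonempty.2 hc0)
    (fun i hi => lt_of_le_of_lt (Polynomial.le_natDegree_of_mem_supp i hi) hcd)
    c.coeff (fun i hi => Polynomial.mem_support_iff.1 hi) (fun r hr => ?_)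
  rw [← eval_supp_sum]
  exact hvan r (lt_of_lt_of_le hr (supp_card_le c hcd))

lemma dftP_ne_zero (hn : 0 < n) {β : L} (hβ : IsPrimitiveRoot β n) (c : L[X])
    (hc0 : c ≠ 0) (hcd : c.natDegree < n) : dftP n β c ≠ 0 := by
  intro h0
  refine hc0 (eval_vanish_all hn hβ c hcd fun j hj => ?_)
  have := dftP_coeff (n := n) (β := β) c hj
  rw [h0, coeff_zero] at this
  exact this.symm

lemma BCHpt (hn : 0 < n) {β : L} (hβ : IsPrimitiveRoot β n) (c : L[X])
    (hc0 : c ≠ 0) (hcd : c.natDegree < n) (h : ℕ) :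
    n - ((X ^ h * dftP n β c) %ₘ (X ^ n - 1)).natDegree ≤ c.support.card := by
  set D := ((X ^ h * dftP n β c) %ₘ (X ^ n - 1)).natDegree with hD
  by_contra hcon
  push_neg at hcon
  set w := c.support.card with hw
  have hwpos : 0 < w := Finset.card_pos.2 (Polynomial.support_nonempty.2 hc0)
  have hDw : D + w < n := by omega
  set C₀ := D + 1 + (n - h % n) with hC₀
  have hvan : ∀ r < w, c.eval (β ^ (C₀ + r)) = 0 := by
    intro r hr
    have h1 : ((X ^ h * dftP n β c) %ₘ (X ^ n - 1)).coeff (D + 1 + r) = 0 :=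
      Polynomial.coeff_eq_zero_of_natDegree_lt (by omega)
    rw [coeff_shiftMod hn _ (dftP_natDegree_lt hn c) h _ (by omega)] at h1
    have h2 := dftP_coeff (n := n) (β := β) c
      (Nat.mod_lt (D + 1 + r + (n - h % n)) hn)
    rw [h2] at h1
    rw [pow_mod' hβ.pow_eq_one] at h1
    have he : D + 1 + r + (n - h % n) = C₀ + r := by omega
    rwa [he] at h1
  refine sparse_vanish hβ w c.support hw.symm (Polynomial.support_nonempty.2 hc0)
    (fun i hi => lt_of_le_of_lt (Polynomial.le_natDegree_of_mem_supp i hi) hcd)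
    (fun i => c.coeff i * (β ^ C₀) ^ i)
    (fun i hi => mul_ne_zero (Polynomial.mem_support_iff.1 hi)
      (pow_ne_zero _ (pow_ne_zero _ (root_ne_zero hn hβ.pow_eq_one))))
    (fun r hr => ?_)
  have := hvan r (by omega)
  rw [eval_supp_sum] at this
  rw [← this]
  refine Finset.sum_congr rfl fun i _ => ?_
  rw [mul_assoc, ← mul_pow, ← pow_add]

lemma orbit_mem (hn : 0 < n) {q' : ℕ} (hcop' : Nat.Coprime q' n) (a : ℕ) (E : ℕ) :
    (q' ^ E * a) % n ∈ (Finset.range n).image (fun e => (q' ^ e * a) % n) := by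
  haveI : NeZero n := ⟨hn.ne'⟩
  set u := ZMod.unitOfCoprime q' hcop' with hu
  set d := orderOf u with hd
  have hdpos : 0 < d := orderOf_pos u
  have hdn : d ≤ n := le_trans orderOf_le_card_univ
    (by rw [ZMod.card_units_eq_totient]; exact Nat.totient_le n)
  have hmod : (q' ^ E * a) % n = (q' ^ (E % d) * a) % n := by
    refine (ZMod.natCast_eq_natCast_iff' _ _ _).1 ?_
    push_cast
    rw [← ZMod.coe_unitOfCoprime q' hcop', ← hu, ← Units.val_pow_eq_pow_val,
      ← Units.val_pow_eq_pow_val, pow_mod_orderOf]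
  rw [hmod]
  exact Finset.mem_image.2 ⟨E % d, Finset.mem_range.2 (lt_of_lt_of_le (Nat.mod_lt _ hdpos) hdn),
    rfl⟩

lemma coe_pow_orderOf (hn : 0 < n) {q' : ℕ} (hcop' : Nat.Coprime q' n) :
    haveI : NeZero n := ⟨hn.ne'⟩
    (q' : ZMod n) ^ orderOf (ZMod.unitOfCoprime q' hcop') = 1 := by
  haveI : NeZero n := ⟨hn.ne'⟩
  rw [← ZMod.coe_unitOfCoprime q' hcop', ← Units.val_pow_eq_pow_val, pow_orderOf_eq_one,
    Units.val_one]

lemma orbit_reach (hn : 0 < n) {q' : ℕ} (hcop' : Nat.Coprime q' n) (a : ℕ) {w j : ℕ}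
    (hw : w ∈ (Finset.range n).image (fun e => (q' ^ e * a) % n))
    (hj : j % n ∈ (Finset.range n).image (fun e => (q' ^ e * a) % n)) :
    ∃ l, ((q' : ZMod n)) ^ l * (j : ZMod n) = (w : ZMod n) := by
  haveI : NeZero n := ⟨hn.ne'⟩
  obtain ⟨el, -, hel⟩ := Finset.mem_image.1 hw
  obtain ⟨ej, -, hej⟩ := Finset.mem_image.1 hj
  set d := orderOf (ZMod.unitOfCoprime q' hcop') with hd
  have hdpos : 0 < d := orderOf_pos _
  have hxd : (q' : ZMod n) ^ d = 1 := coe_pow_orderOf hn hcop'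
  refine ⟨el + ej * (d - 1), ?_⟩
  have hjz : (j : ZMod n) = (q' : ZMod n) ^ ej * a := by
    conv_lhs => rw [← zmod_mod (n := n) (x := j)]
    rw [← hej, zmod_mod]; push_cast; ring
  have hwz : (w : ZMod n) = (q' : ZMod n) ^ el * a := by
    rw [← hel, zmod_mod]; push_cast; ring
  rw [hjz, hwz, ← mul_assoc, ← pow_add]
  have hexp : el + ej * (d - 1) + ej = el + ej * d := by
    have h1 : ej * (d - 1) + ej = ej * d := by
      conv_rhs => rw [← Nat.sub_add_cancel hdpos]
      ring
    omega
  rw [hexp, pow_add, pow_mul', hxd, one_pow, mul_one]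

variable (p : ℕ) [CharP L p] [ExpChar L p]

lemma frob_fix_h (hp : p.Prime) (hn : 0 < n) {α : L} (hα : IsPrimitiveRoot α n)
    {q' m : ℕ} (hq'p : q' = p ^ m) (hcop' : Nat.Coprime q' n) (a : ℕ) :
    Polynomial.map (iterateFrobenius L p m)
        (∏ i ∈ (Finset.range n).image (fun e => (q' ^ e * a) % n), (X - C (α ^ i))) =
      ∏ i ∈ (Finset.range n).image (fun e => (q' ^ e * a) % n), (X - C (α ^ i)) := by
  haveI := Fact.mk hp
  haveI : NeZero n := ⟨hn.ne'⟩
  set T := (Finset.range n).image (fun e => (q' ^ e * a) % n) with hT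
  have hTlt : ∀ i ∈ T, i < n := by
    intro i hi
    obtain ⟨e, -, he⟩ := Finset.mem_image.1 hi
    rw [← he]; exact Nat.mod_lt _ hn
  rw [Polynomial.map_prod]
  have hmap : ∀ i ∈ T, Polynomial.map (iterateFrobenius L p m) (X - C (α ^ i)) =
      X - C (α ^ ((q' * i) % n)) := by
    intro i hi
    rw [Polynomial.map_sub, Polynomial.map_X, Polynomial.map_C]
    congr 1
    rw [iterateFrobenius_def, ← pow_mul, pow_mod' hα.pow_eq_one, mul_comm i, hq'p]
  rw [Finset.prod_congr rfl hmap]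
  set d := orderOf (ZMod.unitOfCoprime q' hcop') with hd
  have hdpos : 0 < d := orderOf_pos _
  have hxd : (q' : ZMod n) ^ d = 1 := coe_pow_orderOf hn hcop'
  have hqmul : ∀ x : ℕ, (q' * ((q' ^ x * a) % n)) % n = (q' ^ (x + 1) * a) % n := by
    intro x
    refine (ZMod.natCast_eq_natCast_iff' _ _ _).1 ?_
    push_cast [zmod_mod]
    ring
  have hq'unit : IsUnit (q' : ZMod n) := by
    rw [← ZMod.coe_unitOfCoprime q' hcop']; exact (ZMod.unitOfCoprime q' hcop').isUnit
  refine Finset.prod_bij (fun i _ => (q' * i) % n) ?_ ?_ ?_ ?_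
  · intro i hi
    obtain ⟨e, -, he⟩ := Finset.mem_image.1 hi
    rw [← he, hqmul e]
    exact orbit_mem hn hcop' a (e + 1)
  · intro i hi i' hi' hc
    have hcast : ((q' * i : ℕ) : ZMod n) = ((q' * i' : ℕ) : ZMod n) := by
      rw [← zmod_mod, hc, zmod_mod]
    push_cast at hcast
    have h2 := hq'unit.mul_left_cancel hcast
    have h3 : i % n = i' % n := (ZMod.natCast_eq_natCast_iff' _ _ _).1 h2
    rwa [Nat.mod_eq_of_lt (hTlt i hi), Nat.mod_eq_of_lt (hTlt i' hi')] at h3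
  · intro w hw
    obtain ⟨e, -, he⟩ := Finset.mem_image.1 hw
    refine ⟨(q' ^ (e + (d - 1)) * a) % n, orbit_mem hn hcop' a (e + (d - 1)), ?_⟩
    rw [hqmul (e + (d - 1))]
    rw [← he]
    refine (ZMod.natCast_eq_natCast_iff' _ _ _).1 ?_
    push_cast
    have hexp : e + (d - 1) + 1 = e + d := by omega
    rw [hexp, pow_add, hxd]
    ring
  · intro i hi; rfl

lemma frob_fix_g (hp : p.Prime) (hn : 0 < n) {α : L} (hα : IsPrimitiveRoot α n)
    {q' m : ℕ} (hq'p : q' = p ^ m) (hcop' : Nat.Coprime q' n) (a : ℕ) {g : L[X]}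
    (hg : g * (∏ i ∈ (Finset.range n).image (fun e => (q' ^ e * a) % n), (X - C (α ^ i)))
      = X ^ n - 1) :
    Polynomial.map (iterateFrobenius L p m) g = g := by
  haveI := Fact.mk hp
  set h := ∏ i ∈ (Finset.range n).image (fun e => (q' ^ e * a) % n), (X - C (α ^ i)) with hh
  have hhne : h ≠ 0 := by
    rw [hh]
    refine Finset.prod_ne_zero_iff.2 fun i _ => X_sub_C_ne_zero (α ^ i)
  have h1 : Polynomial.map (iterateFrobenius L p m) (g * h) = X ^ n - 1 := by
    rw [hg, Polynomial.map_sub, Polynomial.map_pow, Polynomial.map_X, Polynomial.map_one]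
  rw [Polynomial.map_mul, frob_fix_h p hp hn hα hq'p hcop' a, ← hh] at h1
  exact mul_right_cancel₀ hhne (h1.trans hg.symm)

lemma eval_frob (hp : p.Prime) {q' m : ℕ} (hq'p : q' = p ^ m) {g : L[X]}
    (hfix : Polynomial.map (iterateFrobenius L p m) g = g) (β : L) :
    g.eval (β ^ q') = (g.eval β) ^ q' := by
  haveI := Fact.mk hp
  have h0 : (β : L) ^ q' = iterateFrobenius L p m β := by rw [iterateFrobenius_def, hq'p]
  have h2 : (Polynomial.map (iterateFrobenius L p m) g).eval (iterateFrobenius L p m β) =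
      iterateFrobenius L p m (g.eval β) := by
    rw [Polynomial.eval_map, Polynomial.eval₂_at_apply]
  rw [h0]
  conv_lhs => rw [← hfix]
  rw [h2, iterateFrobenius_def, hq'p]

lemma eval_frob_pow (hp : p.Prime) {q' m : ℕ} (hq'p : q' = p ^ m) {g : L[X]}
    (hfix : Polynomial.map (iterateFrobenius L p m) g = g) (β : L) (l : ℕ) :
    g.eval (β ^ q' ^ l) = (g.eval β) ^ q' ^ l := by
  induction l with
  | zero => simp
  | succ l ih =>
    rw [pow_succ, pow_mul, pow_mul, eval_frob p hp hq'p hfix, ih]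

omit [CharP L p] [ExpChar L p]

lemma pow_q_fix {x : L} {q : ℕ} (hx : x ^ q = x) : ∀ r : ℕ, x ^ q ^ r = x := by
  intro r
  induction r with
  | zero => simp
  | succ r ih => rw [pow_succ, pow_mul, ih, hx]

lemma natDegree_mod_lt (hn : 0 < n) (P : L[X]) : (P %ₘ (X ^ n - 1)).natDegree < n := by
  have hM : (X ^ n - 1 : L[X]).Monic := by
    simpa using monic_X_pow_sub_C (1 : L) hn.ne'
  by_cases h0 : P %ₘ (X ^ n - 1) = 0
  · rw [h0]; simpa using hn
  · refine (Polynomial.natDegree_lt_iff_degree_lt h0).2 ?_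
    have hdegM : (X ^ n - 1 : L[X]).degree = n := by
      simpa using degree_X_pow_sub_C hn (1 : L)
    rw [← hdegM]; exact Polynomial.degree_modByMonic_lt P hM

lemma eval_mod_root {β : L} (hβ : β ^ n = 1) (hn : 0 < n) (P : L[X]) :
    (P %ₘ (X ^ n - 1)).eval β = P.eval β := by
  have hM : (X ^ n - 1 : L[X]).Monic := by
    simpa using monic_X_pow_sub_C (1 : L) hn.ne'
  rw [Polynomial.modByMonic_eq_sub_mul_div P (X ^ n - 1), eval_sub, eval_mul, eval_sub, eval_pow,
    eval_X, eval_one, hβ, sub_self, zero_mul, sub_zero]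

lemma inv_pow_eq (hn : 0 < n) {α : L} (hα : α ^ n = 1) {i : ℕ} (hi : i < n) :
    α⁻¹ ^ i = α ^ ((n - i) % n) := by
  by_cases hi0 : i = 0
  · subst hi0; simp
  · have h1 : (n - i) % n = n - i := Nat.mod_eq_of_lt (by omega)
    rw [h1, inv_pow]
    exact inv_eq_of_mul_eq_one_left (by rw [← pow_add, Nat.sub_add_cancel hi.le, hα])

lemma orth (hn : 0 < n) {α : L} (hα : IsPrimitiveRoot α n) {jj l : ℕ} (hjj : jj < n)
    (hl : l < n) :
    ∑ i ∈ range n, (α ^ jj * α⁻¹ ^ l) ^ i = if l = jj then (n : L) else 0 := by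
  have hα0 : α ≠ 0 := root_ne_zero hn hα.pow_eq_one
  by_cases hc : l = jj
  · subst hc
    rw [if_pos rfl, inv_pow, mul_inv_cancel₀ (pow_ne_zero _ hα0)]
    simp
  · rw [if_neg hc]
    set β := α ^ jj * α⁻¹ ^ l with hβ
    have hβn : β ^ n = 1 := by
      have h2 : β ^ n = (α ^ n) ^ jj * ((α ^ n)⁻¹) ^ l := by
        rw [hβ, mul_pow, ← pow_mul, ← pow_mul, mul_comm jj n, mul_comm l n, pow_mul, pow_mul,
          inv_pow]
      rw [h2, hα.pow_eq_one]
      simp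
    have hβ1 : β ≠ 1 := by
      intro h1
      apply hc
      have : α ^ l = α ^ jj := by
        have h2 : α ^ jj * (α ^ l)⁻¹ = 1 := by rw [← inv_pow]; exact h1
        field_simp at h2
        exact h2.symm
      exact hα.pow_inj hl hjj this
    have := geom_sum_mul β n
    rw [hβn, sub_self] at this
    rcases mul_eq_zero.1 this with h | h
    · exact h
    · exact absurd (sub_eq_zero.1 h) hβ1

lemma idft_eval (hn : 0 < n) {α : L} (hα : IsPrimitiveRoot α n) (hnL : (n : L) ≠ 0)
    (r : L[X]) (hrd : r.natDegree < n) {jj : ℕ} (hjj : jj < n) :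
    (idftP n α r).eval (α ^ jj) = r.coeff jj := by
  rw [idftP, eval_mul, eval_C, eval_finset_sum]
  have hterm : ∀ i ∈ range n, (C (r.eval (α⁻¹ ^ i)) * X ^ i).eval (α ^ jj) =
      ∑ l ∈ range n, r.coeff l * (α ^ jj * α⁻¹ ^ l) ^ i := by
    intro i _
    rw [eval_mul, eval_C, eval_pow, eval_X, Polynomial.eval_eq_sum_range' hrd, Finset.sum_mul]
    refine Finset.sum_congr rfl fun l _ => ?_
    ring
  rw [Finset.sum_congr rfl hterm, Finset.sum_comm]
  have hinner : ∀ l ∈ range n, ∑ i ∈ range n, r.coeff l * (α ^ jj * α⁻¹ ^ l) ^ i =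
      r.coeff l * (if l = jj then (n : L) else 0) := by
    intro l hl
    rw [← Finset.mul_sum, orth hn hα hjj (mem_range.1 hl)]
  rw [Finset.sum_congr rfl hinner, Finset.sum_eq_single jj
    (fun b _ hb => by rw [if_neg hb, mul_zero])
    (fun hnot => absurd (mem_range.2 hjj) hnot), if_pos rfl]
  field_simp

lemma solve_k {j t n' : ℕ} (hn' : 0 < n') (hdvd : Nat.gcd j n' ∣ t) :
    ∃ k : ℕ, k < n' ∧ (n' : ℕ) ∣ (j * k + t) := by
  obtain ⟨c, hc⟩ := hdvd
  set A := Int.gcdA j n' with hA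
  set B := Int.gcdB j n' with hB
  have hbez : (Nat.gcd j n' : ℤ) = j * A + n' * B := by
    have := Int.gcd_eq_gcd_ab (j : ℤ) (n' : ℤ)
    rwa [Int.gcd_natCast_natCast] at this
  set K : ℤ := (-A * c) % n' with hK
  have hn'z : (n' : ℤ) ≠ 0 := by exact_mod_cast hn'.ne'
  have hK0 : 0 ≤ K := Int.emod_nonneg _ hn'z
  have hKlt : K < n' := Int.emod_lt_of_pos _ (by exact_mod_cast hn')
  refine ⟨K.toNat, by omega, ?_⟩
  have hdvd2 : (n' : ℤ) ∣ (j * K + t) := by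
    have h1 : (n' : ℤ) ∣ ((-A * c) - K) := Int.dvd_self_sub_of_emod_eq hK.symm
    obtain ⟨y, hy⟩ := h1
    refine ⟨c * B - j * y, ?_⟩
    have ht : (t : ℤ) = Nat.gcd j n' * c := by exact_mod_cast hc
    have hKe : K = -A * c - n' * y := by linarith
    rw [ht, hKe]
    linear_combination (c : ℤ) * hbez
  have : ((j * K.toNat + t : ℕ) : ℤ) = j * K + t := by
    push_cast [Int.toNat_of_nonneg hK0]
    ring
  exact_mod_cast this ▸ hdvd2

end S17
/-- with h the irreducible factor of x^n−1 over F_{q'} whose defining set is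
the q'-cyclotomic coset of a (so h = ∏_{i ∈ C_{q'}(a)} (x − α^i)) and g = (x^n−1)/h, if
g(α^j) = α^t with gcd(j, n/gcd(q−1,n)) ∣ t, then for some k the cyclic code generated by
φ^{-1}_{α, x^k g} satisfies Δ(C) = d(C). -/
theorem stmt17 {L : Type*} [Field L] (p q s q' s' n : ℕ) (hp : p.Prime) [CharP L p]
    (hq : q = p ^ s) (hs : 0 < s) (hq' : q' = q ^ s') (hs' : 0 < s')
    (hn : 0 < n) (hcop : Nat.Coprime n q)
    (α : L) (hα : IsPrimitiveRoot α n) (a : ℕ)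
    (h g : L[X])
    (hh : h = ∏ i ∈ (Finset.range n).image (fun e => (q' ^ e * a) % n), (X - C (α ^ i)))
    (hg : g * h = X ^ n - 1)
    (j t : ℕ) (hj : 0 < j) (ht : 0 < t)
    (heval : g.eval (α ^ j) = α ^ t)
    (hdvd : Nat.gcd j (n / Nat.gcd (q - 1) n) ∣ t) :
    ∃ k < n, ∃ Cc : CyclicCode L q n,
      IsGenBy (idftP n α ((X ^ k * g) %ₘ (X ^ n - 1))) Cc ∧
      appDistCode Cc = minDist Cc := by
  classical
  haveI : Fact p.Prime := ⟨hp⟩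
  haveI : NeZero n := ⟨hn.ne'⟩
  subst hq'
  subst hq
  set q : ℕ := p ^ s with hq
  set q' : ℕ := q ^ s' with hq'
  -- basic facts
  have hp2 : 2 ≤ p := hp.two_le
  have hq2 : 2 ≤ q := by
    have := Nat.one_lt_pow hs.ne' hp.one_lt
    omega
  have hqpow : q' = p ^ (s * s') := by rw [hq', hq, ← pow_mul]
  have hcopq' : Nat.Coprime q' n := by
    rw [hq']; exact (hcop.pow_right s').symm
  have hpq : p ∣ q := hq ▸ dvd_pow_self p hs.ne'
  have hpn : ¬ p ∣ n := by
    intro hdv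
    have h1 : p ∣ Nat.gcd n q := Nat.dvd_gcd hdv hpq
    rw [Nat.Coprime] at hcop
    rw [hcop] at h1
    exact hp.one_lt.ne' (Nat.dvd_one.1 h1)
  have hnL : (n : L) ≠ 0 := fun h0 => hpn ((CharP.cast_eq_zero_iff L p n).1 h0)
  have hαn : α ^ n = 1 := hα.pow_eq_one
  have hα0 : α ≠ 0 := S17.root_ne_zero hn hαn
  set T : Finset ℕ := (Finset.range n).image (fun e => (q' ^ e * a) % n) with hT
  have hTlt : ∀ i ∈ T, i < n := by
    intro i hi
    obtain ⟨e, -, he⟩ := Finset.mem_image.1 hi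
    rw [← he]; exact Nat.mod_lt _ hn
  have hTsub : T ⊆ Finset.range n := fun i hi => Finset.mem_range.2 (hTlt i hi)
  -- facts about h and g
  have hhne : h ≠ 0 := by
    rw [hh]; exact Finset.prod_ne_zero_iff.2 fun i _ => X_sub_C_ne_zero _
  have hXmonic : (X ^ n - 1 : L[X]).Monic := by
    simpa using monic_X_pow_sub_C (1 : L) hn.ne'
  have hgne : g ≠ 0 := fun h0 => hXmonic.ne_zero (by rw [← hg, h0, zero_mul])
  have hm : h.natDegree = T.card := by
    rw [hh, Polynomial.natDegree_prod _ _ (fun i _ => X_sub_C_ne_zero (α ^ i))]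
    rw [Finset.sum_congr rfl (fun i _ => natDegree_X_sub_C (α ^ i))]
    simp
  set m := h.natDegree with hmdef
  have hTne : T.Nonempty := ⟨(q' ^ 0 * a) % n, S17.orbit_mem hn hcopq' a 0⟩
  have hm1 : 1 ≤ m := by rw [hm]; exact Finset.card_pos.2 hTne
  have hdegsum : g.natDegree + m = n := by
    have h1 : (g * h).natDegree = n := by
      rw [hg]
      simpa using natDegree_X_pow_sub_C (n := n) (r := (1 : L))
    rw [← h1, Polynomial.natDegree_mul hgne hhne]
  have hmn : m ≤ n := by omega
  have hgdeg : g.natDegree = n - m := by omega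
  have hgdlt : g.natDegree < n := by omega
  -- product structure of X^n - 1
  have hXn : (X ^ n - 1 : L[X]) = ∏ i ∈ Finset.range n, (X - C (α ^ i)) := by
    have := X_pow_sub_C_eq_prod hα hn (one_pow n)
    simpa using this
  have hgprod : g = ∏ i ∈ Finset.range n \ T, (X - C (α ^ i)) := by
    have h1 : (∏ i ∈ Finset.range n \ T, (X - C (α ^ i))) * h = X ^ n - 1 := by
      rw [hh, hXn, ← Finset.prod_sdiff hTsub]
    exact mul_right_cancel₀ hhne (hg.trans h1.symm)
  have hgz : ∀ w, w < n → (g.eval (α ^ w) ≠ 0 ↔ w ∈ T) := by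
    intro w hw
    constructor
    · intro hne
      by_contra hwT
      refine hne ?_
      rw [hgprod, Polynomial.eval_prod]
      exact Finset.prod_eq_zero (Finset.mem_sdiff.2 ⟨Finset.mem_range.2 hw, hwT⟩)
        (by rw [eval_sub, eval_X, eval_C, sub_self])
    · intro hwT
      rw [hgprod, Polynomial.eval_prod]
      refine Finset.prod_ne_zero_iff.2 fun i hi => ?_
      rw [eval_sub, eval_X, eval_C, sub_ne_zero]
      intro hc
      obtain ⟨hir, hiT⟩ := Finset.mem_sdiff.1 hi
      exact hiT ((hα.pow_inj hw (Finset.mem_range.1 hir) hc) ▸ hwT)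
  have hjT : j % n ∈ T := by
    have h1 : g.eval (α ^ (j % n)) = α ^ t := by rw [S17.pow_mod' hαn, heval]
    exact (hgz (j % n) (Nat.mod_lt _ hn)).1 (by rw [h1]; exact pow_ne_zero _ hα0)
  -- choice of k
  have hd1pos : 0 < Nat.gcd (q - 1) n := Nat.gcd_pos_of_pos_right _ hn
  have hd1n : Nat.gcd (q - 1) n ∣ n := Nat.gcd_dvd_right _ _
  have hn'pos : 0 < n / Nat.gcd (q - 1) n := Nat.div_pos (Nat.le_of_dvd hn hd1n) hd1pos
  obtain ⟨k, hkn', hsol⟩ := S17.solve_k hn'pos hdvd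
  have hkn : k < n := lt_of_lt_of_le hkn' (Nat.div_le_self n _)
  -- the F_q element x
  set x := α ^ (j * k + t) with hx
  have hxq : x ^ q = x := by
    obtain ⟨y, hy⟩ := hsol
    set Gd := Nat.gcd (q - 1) n with hGd
    obtain ⟨z, hzz⟩ := Nat.gcd_dvd_left (q - 1) n
    rw [← hGd] at hzz
    have hnd : n ∣ (j * k + t) * (q - 1) := by
      refine ⟨y * z, ?_⟩
      have hnn : n / Gd * Gd = n := Nat.div_mul_cancel hd1n
      calc (j * k + t) * (q - 1) = (n / Gd * Gd) * (y * z) := by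
            rw [hy, hzz]; ring
      _ = n * (y * z) := by rw [hnn]
    have h1 : x ^ (q - 1) = 1 := by
      rw [hx, ← pow_mul]
      exact (hα.pow_eq_one_iff_dvd _).2 hnd
    calc x ^ q = x ^ (q - 1) * x := by
          rw [← pow_succ]
          congr 1
          omega
    _ = x := by rw [h1, one_mul]
  -- Frobenius fixes g
  have hfixg : Polynomial.map (iterateFrobenius L p (s * s')) g = g := by
    refine S17.frob_fix_g p hp hn hα hqpow hcopq' a ?_
    rw [← hT, ← hh]; exact hg
  -- the value identity
  have hval : ∀ w ∈ T, α ^ (w * k) * g.eval (α ^ w) = x := by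
    intro w hw
    obtain ⟨l, hl⟩ := S17.orbit_reach hn hcopq' a (hT ▸ hw) hjT
    have hαw : α ^ w = (α ^ j) ^ q' ^ l := by
      have h1 : α ^ w = α ^ (q' ^ l * j) :=
        S17.pow_congr_zmod hn hαn (by push_cast; rw [hl])
      rw [h1, mul_comm, pow_mul]
    have hαwk : α ^ (w * k) = ((α ^ j) ^ k) ^ q' ^ l := by
      have h1 : α ^ (w * k) = α ^ (q' ^ l * j * k) := by
        refine S17.pow_congr_zmod hn hαn ?_
        push_cast
        rw [hl]
      rw [h1]
      simp only [← pow_mul]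
      congr 1
      ring
    rw [hαwk, hαw, S17.eval_frob_pow p hp hqpow hfixg, heval, ← mul_pow]
    have h3 : (α ^ j) ^ k * α ^ t = x := by rw [hx, ← pow_mul, pow_add]
    rw [h3]
    have h4 : q' ^ l = q ^ (s' * l) := by rw [hq', ← pow_mul]
    rw [h4]
    exact S17.pow_q_fix hxq (s' * l)
  -- e and r
  have hrdeg : ((X ^ k * g) %ₘ (X ^ n - 1)).natDegree < n := S17.natDegree_mod_lt hn _
  have hrootw : ∀ w : ℕ, (α ^ w) ^ n = 1 := S17.eval_root_pow hαn
  have hreval : ∀ i : ℕ, i < n → ((X ^ k * g) %ₘ (X ^ n - 1)).eval (α⁻¹ ^ i) =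
      (α ^ ((n - i) % n)) ^ k * g.eval (α ^ ((n - i) % n)) := by
    intro i hi
    rw [S17.inv_pow_eq hn hαn hi, S17.eval_mod_root (hrootw _) hn, eval_mul, eval_pow, eval_X]
  have hcoeff_e : ∀ i, i < n → (idftP n α ((X ^ k * g) %ₘ (X ^ n - 1))).coeff i =
      (n : L)⁻¹ * ((X ^ k * g) %ₘ (X ^ n - 1)).eval (α⁻¹ ^ i) := by
    intro i hi
    rw [idftP, Polynomial.coeff_C_mul]
    congr 1
    have := S17.coeff_sum_single (L := L)
      (fun i => ((X ^ k * g) %ₘ (X ^ n - 1)).eval (α⁻¹ ^ i)) (fun i => i) i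
      (Finset.mem_range.2 hi) (fun j' _ hne => hne)
    simpa using this
  have hcoeff_e_hi : ∀ i, n ≤ i → (idftP n α ((X ^ k * g) %ₘ (X ^ n - 1))).coeff i = 0 := by
    intro i hi
    rw [idftP, Polynomial.coeff_C_mul, S17.coeff_sum_zero _ (fun i => i) i
      (fun j' hj' => by have := Finset.mem_range.1 hj'; show j' ≠ i; omega), mul_zero]
  have hq0 : q ≠ 0 := by omega
  have hnq : ((n : L)) ^ q = (n : L) := by
    have h3 := map_natCast (iterateFrobenius L p s) n
    rwa [iterateFrobenius_def, ← hq] at h3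
  have hFq : ∀ i, (idftP n α ((X ^ k * g) %ₘ (X ^ n - 1))).coeff i ^ q =
      (idftP n α ((X ^ k * g) %ₘ (X ^ n - 1))).coeff i := by
    intro i
    rcases lt_or_ge i n with hi | hi
    · rw [hcoeff_e i hi, hreval i hi]
      set w := (n - i) % n with hwd
      have hwn : w < n := Nat.mod_lt _ hn
      by_cases hgw : g.eval (α ^ w) = 0
      · rw [hgw, mul_zero, mul_zero]
        exact zero_pow hq0
      · have hwT : w ∈ T := (hgz w hwn).1 hgw
        have hv := hval w hwT
        rw [← pow_mul, hv, mul_pow, hxq, inv_pow, hnq]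
    · rw [hcoeff_e_hi i hi]
      exact zero_pow hq0
  -- support of e
  have hcne : (n : L)⁻¹ ≠ 0 := inv_ne_zero hnL
  have hsupp_iff : ∀ i, i ∈ (idftP n α ((X ^ k * g) %ₘ (X ^ n - 1))).support ↔
      (i < n ∧ (n - i) % n ∈ T) := by
    intro i
    rw [Polynomial.mem_support_iff]
    constructor
    · intro hne
      have hi : i < n := by
        by_contra hge
        exact hne (hcoeff_e_hi i (by omega))
      refine ⟨hi, ?_⟩
      rw [hcoeff_e i hi, hreval i hi] at hne
      have hgw : g.eval (α ^ ((n - i) % n)) ≠ 0 := by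
        intro h0; rw [h0, mul_zero, mul_zero] at hne; exact hne rfl
      exact (hgz _ (Nat.mod_lt _ hn)).1 hgw
    · rintro ⟨hi, hwT⟩
      rw [hcoeff_e i hi, hreval i hi]
      exact mul_ne_zero hcne (mul_ne_zero (pow_ne_zero _ (pow_ne_zero _ hα0))
        ((hgz _ (Nat.mod_lt _ hn)).2 hwT))
  have hinvol : ∀ y, y < n → (n - ((n - y) % n)) % n = y := by
    intro y hy
    by_cases hy0 : y = 0
    · subst hy0; simp
    · have h1 : (n - y) % n = n - y := Nat.mod_eq_of_lt (by omega)
      rw [h1, Nat.sub_sub_self hy.le, Nat.mod_eq_of_lt hy]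
  have hwt : (idftP n α ((X ^ k * g) %ₘ (X ^ n - 1))).support.card = m := by
    rw [hm]
    refine Finset.card_bij' (fun i _ => (n - i) % n) (fun w _ => (n - w) % n) ?_ ?_ ?_ ?_
    · intro i hi; exact ((hsupp_iff i).1 hi).2
    · intro w hw
      have hwn : w < n := hTlt w hw
      refine (hsupp_iff _).2 ⟨Nat.mod_lt _ hn, ?_⟩
      rw [hinvol w hwn]; exact hw
    · intro i hi; exact hinvol i ((hsupp_iff i).1 hi).1
    · intro w hw; exact hinvol w (hTlt w hw)
  have he0 : idftP n α ((X ^ k * g) %ₘ (X ^ n - 1)) ≠ 0 := by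
    intro h0
    rw [h0, Polynomial.support_zero, Finset.card_empty] at hwt
    omega
  have hedeg : (idftP n α ((X ^ k * g) %ₘ (X ^ n - 1))).natDegree < n := by
    rw [idftP]
    exact lt_of_le_of_lt (Polynomial.natDegree_C_mul_le _ _)
      (S17.natDegree_sum_lt hn _ (fun i => i) (fun i hi => hi))
  have her : ∀ jj, jj < n → (idftP n α ((X ^ k * g) %ₘ (X ^ n - 1))).eval (α ^ jj) =
      ((X ^ k * g) %ₘ (X ^ n - 1)).coeff jj :=
    fun jj hjj => S17.idft_eval hn hα hnL _ hrdeg hjj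
  -- F_q closure facts
  have hFq_add : ∀ u v : L, u ^ q = u → v ^ q = v → (u + v) ^ q = u + v := by
    intro u v hu hv
    rw [hq, add_pow_char_pow, ← hq, hu, hv]
  have hFq_sub : ∀ u v : L, u ^ q = u → v ^ q = v → (u - v) ^ q = u - v := by
    intro u v hu hv
    rw [hq, sub_pow_char_pow, ← hq, hu, hv]
  -- the "local" cyclic code Cr
  set CrC : Set (Polynomial L) := {c | c.natDegree < n ∧ (∀ i, c.coeff i ^ q = c.coeff i) ∧
    ∀ jj, jj < n → ((X ^ k * g) %ₘ (X ^ n - 1)).coeff jj = 0 → c.eval (α ^ jj) = 0} with hCrC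
  have hzero_mem : (0 : L[X]) ∈ CrC := by
    refine ⟨by simpa using hn, fun i => by rw [Polynomial.coeff_zero]; exact zero_pow hq0, fun jj _ _ => by simp⟩
  have hadd_mem : ∀ c ∈ CrC, ∀ c' ∈ CrC, c + c' ∈ CrC := by
    rintro c ⟨hc1, hc2, hc3⟩ c' ⟨hc1', hc2', hc3'⟩
    refine ⟨lt_of_le_of_lt (Polynomial.natDegree_add_le c c') (max_lt hc1 hc1'), fun i => by
      rw [Polynomial.coeff_add]; exact hFq_add _ _ (hc2 i) (hc2' i), fun jj h1 h2 => by
      rw [eval_add, hc3 jj h1 h2, hc3' jj h1 h2, add_zero]⟩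
  have hsmul_mem : ∀ a' : L, a' ^ q = a' → ∀ c ∈ CrC, Polynomial.C a' * c ∈ CrC := by
    rintro a' ha' c ⟨hc1, hc2, hc3⟩
    refine ⟨lt_of_le_of_lt (Polynomial.natDegree_C_mul_le a' c) hc1, fun i => by
      rw [Polynomial.coeff_C_mul, mul_pow, ha', hc2 i], fun jj h1 h2 => by
      rw [eval_mul, eval_C, hc3 jj h1 h2, mul_zero]⟩
  have hshift_mem : ∀ c ∈ CrC, (Polynomial.X * c) %ₘ (Polynomial.X ^ n - 1) ∈ CrC := by
    rintro c ⟨hcd, hcf, hcz⟩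
    set lc := c.coeff (n - 1) with hlc
    have hcoeffρ : ∀ i : ℕ, (X * c - C lc * (X ^ n - 1)).coeff i =
        (X * c).coeff i - lc * ((X ^ n : L[X]).coeff i - (1 : L[X]).coeff i) := by
      intro i
      rw [Polynomial.coeff_sub, Polynomial.coeff_C_mul, Polynomial.coeff_sub]
    have hXc : ∀ i : ℕ, (X * c).coeff i = if i = 0 then 0 else c.coeff (i - 1) := by
      intro i
      cases i with
      | zero => simp [Polynomial.mul_coeff_zero]
      | succ i' => rw [Polynomial.coeff_X_mul]; simp
    have hdegρ : (X * c - C lc * (X ^ n - 1)).degree < (n : WithBot ℕ) := by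
      rw [Polynomial.degree_lt_iff_coeff_zero]
      intro mm hmm'
      have hmge : n ≤ mm := by exact_mod_cast hmm'
      rw [hcoeffρ, hXc]
      have hne0 : mm ≠ 0 := by omega
      rw [if_neg hne0, Polynomial.coeff_X_pow, Polynomial.coeff_one, if_neg (by omega : mm ≠ 0)]
      rcases eq_or_lt_of_le hmge with heq | hlt
      · rw [← heq, if_pos rfl, ← hlc]
        ring
      · rw [if_neg (by omega : mm ≠ n)]
        rw [Polynomial.coeff_eq_zero_of_natDegree_lt (by omega : c.natDegree < mm - 1)]
        ring
    have hmodeq2 : (X * c) %ₘ (X ^ n - 1) = X * c - C lc * (X ^ n - 1) :=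
      S17.modEq_helper hn _ _ ⟨C lc, by ring⟩ hdegρ
    rw [hmodeq2]
    refine ⟨?_, ?_, ?_⟩
    · by_cases h0 : (X * c - C lc * (X ^ n - 1) : L[X]) = 0
      · rw [h0]; simpa using hn
      · exact (Polynomial.natDegree_lt_iff_degree_lt h0).2 hdegρ
    · intro i
      rw [hcoeffρ, hXc]
      cases i with
      | zero =>
        rw [if_pos rfl, Polynomial.coeff_X_pow, Polynomial.coeff_one,
          if_neg (by omega : (0 : ℕ) ≠ n), if_pos rfl]
        have hv : (0 : L) - lc * ((0 : L) - 1) = lc := by ring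
        rw [hv]
        exact hcf (n - 1)
      | succ i' =>
        rw [if_neg (by omega : i' + 1 ≠ 0), Polynomial.coeff_X_pow, Polynomial.coeff_one,
          if_neg (by omega : i' + 1 ≠ 0)]
        simp only [Nat.add_sub_cancel]
        by_cases hcase : i' + 1 = n
        · rw [if_pos hcase]
          have hi' : i' = n - 1 := by omega
          rw [hi', ← hlc]
          have hv : lc - lc * ((1 : L) - 0) = 0 := by ring
          rw [hv]
          exact zero_pow hq0
        · rw [if_neg hcase]
          have hv : c.coeff i' - lc * ((0 : L) - 0) = c.coeff i' := by ring
          rw [hv]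
          exact hcf i'
    · intro jj h1 h2
      rw [eval_sub, eval_mul, eval_mul, eval_X, eval_C, eval_sub, eval_pow, eval_X, eval_one,
        hcz jj h1 h2, hrootw jj]
      ring
  have heCr : idftP n α ((X ^ k * g) %ₘ (X ^ n - 1)) ∈ CrC :=
    ⟨hedeg, hFq, fun jj hjj h0 => by rw [her jj hjj]; exact h0⟩
  let Cr : CyclicCode L q n :=
    ⟨CrC, hzero_mem, fun f hf => hf.1, fun f hf => hf.2.1, hadd_mem, hsmul_mem, hshift_mem⟩
  -- the minimal code
  let Cmin : CyclicCode L q n :=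
    { carrier := {c | ∀ C' : CyclicCode L q n,
        idftP n α ((X ^ k * g) %ₘ (X ^ n - 1)) ∈ C'.carrier → c ∈ C'.carrier}
      zero_mem := fun C' _ => C'.zero_mem
      deg_lt := fun f hf => Cr.deg_lt f (hf Cr heCr)
      coeff_mem := fun f hf => Cr.coeff_mem f (hf Cr heCr)
      add_mem := fun f hf g' hg' C' hC' => C'.add_mem f (hf C' hC') g' (hg' C' hC')
      smul_mem := fun a' ha' f hf C' hC' => C'.smul_mem a' ha' f (hf C' hC')
      shift_mem := fun f hf C' hC' => C'.shift_mem f (hf C' hC') }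
  have heCmin : idftP n α ((X ^ k * g) %ₘ (X ^ n - 1)) ∈ Cmin.carrier := fun C' hC' => hC'
  have hsubCr : ∀ c ∈ Cmin.carrier, c ∈ CrC := fun c hc => hc Cr heCr
  -- the shift h₀ and the degree bound
  have hh₀n : (n - k) % n < n := Nat.mod_lt _ hn
  have hLB : ∀ c : L[X], c ∈ CrC →
      ((X ^ ((n - k) % n) * dftP n α c) %ₘ (X ^ n - 1)).natDegree ≤ n - m := by
    rintro c ⟨hcd, -, hcz⟩
    refine Polynomial.natDegree_le_iff_coeff_eq_zero.2 fun N hN => ?_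
    rcases lt_or_ge N n with hNn | hNn
    · rw [S17.coeff_shiftMod hn _ (S17.dftP_natDegree_lt hn c) _ N hNn]
      set jN := (N + (n - ((n - k) % n) % n)) % n with hjN
      have hjNn : jN < n := Nat.mod_lt _ hn
      rw [S17.dftP_coeff c hjNn]
      refine hcz jN hjNn ?_
      rw [S17.coeff_shiftMod hn g hgdlt k jN hjNn]
      have hmodk : k % n = k := Nat.mod_eq_of_lt hkn
      have hh₀mod : ((n - k) % n) % n = (n - k) % n := Nat.mod_eq_of_lt hh₀n
      have hidx : (jN + (n - k % n)) % n = N := by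
        refine S17.zmod_inj (Nat.mod_lt _ hn) hNn ?_
        rw [S17.zmod_mod, hmodk]
        have hcast2 : (jN : ZMod n) = (N : ZMod n) + (k : ZMod n) := by
          rw [hjN, S17.zmod_mod, hh₀mod]
          push_cast [Nat.cast_sub hh₀n.le, Nat.cast_sub hkn.le, S17.zmod_mod]
          rw [ZMod.natCast_self]
          ring
        push_cast [Nat.cast_sub hkn.le]
        rw [hcast2, ZMod.natCast_self]
        ring
      rw [hidx]
      exact Polynomial.coeff_eq_zero_of_natDegree_lt (by omega)
    · exact Polynomial.coeff_eq_zero_of_natDegree_lt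
        (lt_of_lt_of_le (S17.natDegree_mod_lt hn _) hNn)
  -- apparent distance bounds
  have happ_le : ∀ (β : L), IsPrimitiveRoot β n → ∀ c : L[X], c ∈ Cmin.carrier → c ≠ 0 →
      appDist n (dftP n β c) ≤ c.support.card := by
    intro β hβ c hc hc0
    obtain ⟨hcd, -, -⟩ := hsubCr c hc
    rw [appDist, if_neg (S17.dftP_ne_zero hn hβ c hc0 hcd)]
    exact Finset.sup_le fun hsh _ => S17.BCHpt hn hβ c hc0 hcd hsh
  have happ_ge : ∀ c : L[X], c ∈ Cmin.carrier → c ≠ 0 → m ≤ appDist n (dftP n α c) := by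
    intro c hc hc0
    have hcr := hsubCr c hc
    have hcd := hcr.1
    rw [appDist, if_neg (S17.dftP_ne_zero hn hα c hc0 hcd)]
    refine le_trans ?_ (Finset.le_sup (Finset.mem_range.2 hh₀n))
    have := hLB c hcr
    omega
  have hwt_ge : ∀ c : L[X], c ∈ Cmin.carrier → c ≠ 0 → m ≤ c.support.card := by
    intro c hc hc0
    have hcr := hsubCr c hc
    have hcd := hcr.1
    refine le_trans ?_ (S17.BCHpt hn hα c hc0 hcd ((n - k) % n))
    have := hLB c hcr
    omega
  have he_app : appDist n (dftP n α (idftP n α ((X ^ k * g) %ₘ (X ^ n - 1)))) = m :=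
    le_antisymm (by rw [← hwt]; exact happ_le α hα _ heCmin he0) (happ_ge _ heCmin he0)
  -- the three distance computations
  have hmin : minDist Cmin = m := by
    rw [minDist]
    refine IsLeast.csInf_eq ⟨⟨_, heCmin, he0, hwt.symm⟩, ?_⟩
    rintro w ⟨c, hc, hc0, rfl⟩
    exact hwt_ge c hc hc0
  have hAt : appDistAt α Cmin = m := by
    rw [appDistAt]
    refine IsLeast.csInf_eq ⟨⟨_, heCmin, he0, he_app.symm⟩, ?_⟩
    rintro d ⟨c, hc, hc0, rfl⟩
    exact happ_ge c hc hc0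
  have hAtle : ∀ β : L, IsPrimitiveRoot β n → appDistAt β Cmin ≤ m := by
    intro β hβ
    rw [appDistAt]
    refine le_trans (csInf_le (OrderBot.bddBelow _) ⟨_, heCmin, he0, rfl⟩) ?_
    rw [← hwt]
    exact happ_le β hβ _ heCmin he0
  have hCode : appDistCode Cmin = m := by
    rw [appDistCode]
    refine IsGreatest.csSup_eq ⟨⟨α, hα, hAt.symm⟩, ?_⟩
    rintro d ⟨β, hβ, rfl⟩
    exact hAtle β hβ
  exact ⟨k, hkn, Cmin, ⟨heCmin, fun C' hC' c hc => hc C' hC'⟩, by rw [hCode, hmin]⟩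
end
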